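/- arXiv:1108.5779 — 4 statements merged into one kernel-verified Lean document; each statement's English description precedes it below -/
import Mathlib

section
/- Let n ≥ 1 and let X be a nilpotent formal vector field on ℂⁿ singular at 0, i.e. a ℂ-derivation of ℂ[[x₁,…,xₙ]] with X(m) ⊆ m whose induced endomorphism of m/m² is nilpotent. Let f, h ∈ ℂ[[x₁,…,xₙ]] with f ≠ 0 and h ≠ 0, and let λ ∈ ℂ satisfy h·X(f) − f·X(h) = λ·f·h (i.e. the rational function f/h is an eigenvector of X with eigenvalue λ). Then λ = 0. -/
noncomputable def mIdeal (n : ℕ) : Ideal (MvPowerSeries (Fin n) ℂ) :=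
  RingHom.ker (MvPowerSeries.constantCoeff : MvPowerSeries (Fin n) ℂ →+* ℂ)

namespace EigenAux

open MvPowerSeries Finset

variable {n : ℕ}

lemma mem_mIdeal {g : MvPowerSeries (Fin n) ℂ} :
    g ∈ mIdeal n ↔ MvPowerSeries.constantCoeff g = 0 := RingHom.mem_ker

/-- coefficients vanish below degree `j` -/
def LowZero (j : ℕ) (g : MvPowerSeries (Fin n) ℂ) : Prop :=
  ∀ s : Fin n →₀ ℕ, s.degree < j → MvPowerSeries.coeff s g = 0

lemma degree_add' (p q : Fin n →₀ ℕ) : (p + q).degree = p.degree + q.degree := by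
  simp [Finsupp.degree_eq_weight_one, map_add]

lemma degree_single (i : Fin n) : (Finsupp.single i 1).degree = 1 := by
  simp [Finsupp.degree_eq_weight_one, Finsupp.weight_apply, Finsupp.sum_single_index]

lemma lowZero_of_mem_pow : ∀ (j : ℕ) (g : MvPowerSeries (Fin n) ℂ),
    g ∈ (mIdeal n) ^ j → LowZero j g := by
  intro j
  induction j with
  | zero => intro g _ s hs; omega
  | succ j ih =>
    intro g hg
    rw [pow_succ] at hg
    refine Submodule.mul_induction_on hg ?_ ?_
    · intro a ha b hb s hs
      classical
      rw [MvPowerSeries.coeff_mul]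
      apply Finset.sum_eq_zero
      rintro ⟨p, q⟩ hpq
      rw [Finset.HasAntidiagonal.mem_antidiagonal] at hpq
      have hdeg : p.degree + q.degree = s.degree := by rw [← degree_add', hpq]
      by_cases hp : p.degree < j
      · rw [ih a ha p hp, zero_mul]
      · have hq : q = 0 := by
          rw [← Finsupp.degree_eq_zero_iff]; omega
        subst hq
        rw [MvPowerSeries.coeff_zero_eq_constantCoeff, mem_mIdeal.mp hb, mul_zero]
    · intro x y hx hy s hs
      rw [map_add, hx s hs, hy s hs, add_zero]

lemma mem_pow_of_lowZero : ∀ (j : ℕ) (g : MvPowerSeries (Fin n) ℂ),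
    LowZero j g → g ∈ (mIdeal n) ^ j := by
  intro j
  induction j with
  | zero => intro g _; simp
  | succ j ih =>
    intro g hg
    classical
    set gi : Fin n → MvPowerSeries (Fin n) ℂ := fun i t =>
      if ∀ l, l < i → t l = 0 then MvPowerSeries.coeff (t + Finsupp.single i 1) g else 0 with hgi
    have hcoeff : ∀ (i : Fin n) (t : Fin n →₀ ℕ), MvPowerSeries.coeff t (gi i) =
        if ∀ l, l < i → t l = 0 then MvPowerSeries.coeff (t + Finsupp.single i 1) g else 0 :=
      fun i t => rfl
    have hXgi : ∀ (i : Fin n) (s : Fin n →₀ ℕ),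
        MvPowerSeries.coeff s (MvPowerSeries.X i * gi i) =
        if (1 ≤ s i ∧ ∀ l, l < i → s l = 0) then MvPowerSeries.coeff s g else 0 := by
      intro i s
      rw [MvPowerSeries.X_def, MvPowerSeries.coeff_monomial_mul]
      by_cases hle : Finsupp.single i 1 ≤ s
      · rw [if_pos hle, hcoeff, one_mul]
        have h1 : 1 ≤ s i := by simpa using (Finsupp.single_le_iff.mp hle)
        have h2 : ∀ l : Fin n, l < i → ((s - Finsupp.single i 1 : Fin n →₀ ℕ)) l = s l := by
          intro l hl
          rw [Finsupp.tsub_apply, Finsupp.single_apply,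
            if_neg (by exact fun h => absurd h (ne_of_gt hl))]
          omega
        have h3 : (s - Finsupp.single i 1) + Finsupp.single i 1 = s := tsub_add_cancel_of_le hle
        by_cases hc : ∀ l, l < i → s l = 0
        · rw [if_pos (fun l hl => by rw [h2 l hl]; exact hc l hl), h3, if_pos ⟨h1, hc⟩]
        · rw [if_neg, if_neg]
          · rintro ⟨-, hc'⟩; exact hc hc'
          · intro hc'; exact hc fun l hl => by rw [← h2 l hl]; exact hc' l hl
      · rw [if_neg hle, if_neg]
        rintro ⟨h1, -⟩
        exact hle (Finsupp.single_le_iff.mpr (by simpa using h1))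
    have hg_eq : g = ∑ i : Fin n, MvPowerSeries.X i * gi i := by
      ext s
      rw [map_sum]
      by_cases hs0 : s = 0
      · subst hs0
        rw [Finset.sum_eq_zero fun i _ => by
          rw [hXgi]; exact if_neg (by rintro ⟨h1, -⟩; simp at h1)]
        exact hg 0 (by simp)
      · have hsupp : s.support.Nonempty := by
          rw [Finsupp.support_nonempty_iff]; exact hs0
        set i0 := s.support.min' hsupp with hi0
        have hi0mem : i0 ∈ s.support := s.support.min'_mem hsupp
        have hi0pos : 1 ≤ s i0 := by
          have := Finsupp.mem_support_iff.mp hi0mem; omega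
        have hi0min : ∀ l, l < i0 → s l = 0 := by
          intro l hl
          by_contra hne
          exact absurd (s.support.min'_le l (Finsupp.mem_support_iff.mpr hne)) (by
            exact not_le.mpr hl)
        rw [Finset.sum_eq_single i0]
        · rw [hXgi, if_pos ⟨hi0pos, hi0min⟩]
        · intro i _ hne
          rw [hXgi]
          apply if_neg
          rintro ⟨h1, h2⟩
          rcases lt_or_gt_of_ne hne with hlt | hgt
          · exact absurd (hi0min i hlt) (by omega)
          · exact absurd (h2 i0 hgt) (by omega)
        · intro habs; exact absurd (Finset.mem_univ i0) habs
    rw [hg_eq, pow_succ']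
    apply Ideal.sum_mem
    intro i _
    apply Ideal.mul_mem_mul
    · rw [mem_mIdeal]; exact MvPowerSeries.constantCoeff_X i
    · apply ih
      intro t ht
      rw [hcoeff]
      by_cases hc : ∀ l, l < i → t l = 0
      · rw [if_pos hc]
        apply hg
        rw [degree_add', degree_single]
        omega
      · rw [if_neg hc]

lemma exists_exact {g : MvPowerSeries (Fin n) ℂ} (hg : g ≠ 0) :
    ∃ d : ℕ, g ∈ (mIdeal n) ^ d ∧ g ∉ (mIdeal n) ^ (d + 1) := by
  classical
  have hex : ∃ j : ℕ, g ∉ (mIdeal n) ^ (j + 1) := by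
    have : ∃ s : Fin n →₀ ℕ, MvPowerSeries.coeff s g ≠ 0 := by
      by_contra hall
      push_neg at hall
      exact hg (MvPowerSeries.ext fun s => by rw [hall s, map_zero])
    obtain ⟨s, hs⟩ := this
    exact ⟨s.degree, fun hmem => hs (lowZero_of_mem_pow _ g hmem s (Nat.lt_succ_self _))⟩
  refine ⟨Nat.find hex, ?_, Nat.find_spec hex⟩
  rcases Nat.eq_zero_or_pos (Nat.find hex) with h0 | h0
  · rw [h0]; simp
  · have := Nat.find_min hex (m := Nat.find hex - 1) (by omega)
    rw [not_not] at this
    convert this using 2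
    omega

lemma mul_not_mem_pow {u v : MvPowerSeries (Fin n) ℂ} {d e : ℕ}
    (hu : u ∈ (mIdeal n) ^ d) (hu' : u ∉ (mIdeal n) ^ (d + 1))
    (hv : v ∈ (mIdeal n) ^ e) (hv' : v ∉ (mIdeal n) ^ (e + 1)) :
    u * v ∉ (mIdeal n) ^ (d + e + 1) := by
  classical
  set U := MvPowerSeries.homogeneousComponent d u with hU
  set V := MvPowerSeries.homogeneousComponent e v with hV
  have hcU : ∀ s, MvPowerSeries.coeff s U =
      if s.degree = d then MvPowerSeries.coeff s u else 0 :=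
    fun s => MvPowerSeries.coeff_homogeneousComponent d s u
  have hcV : ∀ s, MvPowerSeries.coeff s V =
      if s.degree = e then MvPowerSeries.coeff s v else 0 :=
    fun s => MvPowerSeries.coeff_homogeneousComponent e s v
  have hUne : U ≠ 0 := by
    intro h0
    apply hu'
    apply mem_pow_of_lowZero
    intro s hs
    rcases Nat.lt_or_ge s.degree d with hlt | hge
    · exact lowZero_of_mem_pow d u hu s hlt
    · have hsd : s.degree = d := by omega
      have := congrArg (MvPowerSeries.coeff s) h0
      rw [hcU, if_pos hsd, map_zero] at this
      exact this
  have hVne : V ≠ 0 := by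
    intro h0
    apply hv'
    apply mem_pow_of_lowZero
    intro s hs
    rcases Nat.lt_or_ge s.degree e with hlt | hge
    · exact lowZero_of_mem_pow e v hv s hlt
    · have hse : s.degree = e := by omega
      have := congrArg (MvPowerSeries.coeff s) h0
      rw [hcV, if_pos hse, map_zero] at this
      exact this
  have hUVne : U * V ≠ 0 := mul_ne_zero hUne hVne
  obtain ⟨s, hsne⟩ : ∃ s, MvPowerSeries.coeff s (U * V) ≠ 0 := by
    by_contra hall
    push_neg at hall
    exact hUVne (MvPowerSeries.ext fun s => by rw [hall s, map_zero])
  -- degree of s is d + e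
  have hsdeg : s.degree = d + e := by
    by_contra hne
    apply hsne
    rw [MvPowerSeries.coeff_mul]
    apply Finset.sum_eq_zero
    rintro ⟨p, q⟩ hpq
    rw [Finset.HasAntidiagonal.mem_antidiagonal] at hpq
    have hdq : p.degree + q.degree = s.degree := by rw [← degree_add', hpq]
    rw [hcU, hcV]
    by_cases hp : p.degree = d
    · by_cases hq : q.degree = e
      · exact absurd (show s.degree = d + e by omega) hne
      · rw [if_neg hq, mul_zero]
    · rw [if_neg hp, zero_mul]
  have hkey : MvPowerSeries.coeff s (u * v) = MvPowerSeries.coeff s (U * V) := by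
    rw [MvPowerSeries.coeff_mul, MvPowerSeries.coeff_mul]
    apply Finset.sum_congr rfl
    rintro ⟨p, q⟩ hpq
    rw [Finset.HasAntidiagonal.mem_antidiagonal] at hpq
    have hdq : p.degree + q.degree = d + e := by rw [← degree_add', hpq, hsdeg]
    rw [hcU, hcV]
    rcases Nat.lt_trichotomy p.degree d with hlt | heq | hgt
    · simp [lowZero_of_mem_pow d u hu p hlt, show ¬p.degree = d by omega]
    · have hq : q.degree = e := by omega
      rw [if_pos heq, if_pos hq]
    · have hq : q.degree < e := by omega
      simp [lowZero_of_mem_pow e v hv q hq, show ¬q.degree = e by omega]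
  intro hmem
  exact hsne (hkey ▸ lowZero_of_mem_pow _ _ hmem s (by omega))

section Deriv

variable (X : Derivation ℂ (MvPowerSeries (Fin n) ℂ) (MvPowerSeries (Fin n) ℂ))

lemma pow_apply_succ (i : ℕ) (a : MvPowerSeries (Fin n) ℂ) :
    (X.toLinearMap ^ i) (X a) = (X.toLinearMap ^ (i + 1)) a := by
  rw [pow_succ, Module.End.mul_apply]; rfl

lemma deriv_pow_mul : ∀ (M : ℕ) (a b : MvPowerSeries (Fin n) ℂ),
    (X.toLinearMap ^ M) (a * b) =
      ∑ i ∈ Finset.range (M + 1), M.choose i •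
        ((X.toLinearMap ^ i) a * (X.toLinearMap ^ (M - i)) b) := by
  intro M
  induction M with
  | zero => intro a b; simp
  | succ M ih =>
    intro a b
    set T := X.toLinearMap with hT
    have h1 : (T ^ (M + 1)) (a * b) = (T ^ M) (a * X b) + (T ^ M) (X a * b) := by
      rw [pow_succ, Module.End.mul_apply]
      have hl : T (a * b) = a * X b + X a * b := by
        show X (a * b) = a * X b + X a * b
        rw [X.leibniz, smul_eq_mul, smul_eq_mul]; ring
      rw [hl, map_add]
    rw [h1, ih, ih]
    have e1 : ∀ i ∈ Finset.range (M + 1),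
        M.choose i • ((T ^ i) a * (T ^ (M - i)) (X b)) =
        M.choose i • ((T ^ i) a * (T ^ (M + 1 - i)) b) := by
      intro i hi
      rw [Finset.mem_range] at hi
      rw [pow_apply_succ]
      have : M - i + 1 = M + 1 - i := by omega
      rw [this]
    have e2 : ∀ i ∈ Finset.range (M + 1),
        M.choose i • ((T ^ i) (X a) * (T ^ (M - i)) b) =
        M.choose i • ((T ^ (i + 1)) a * (T ^ (M - i)) b) := by
      intro i _
      rw [pow_apply_succ]
    rw [Finset.sum_congr rfl e1, Finset.sum_congr rfl e2]
    rw [Finset.sum_range_succ'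
      (fun i => (M + 1).choose i • ((T ^ i) a * (T ^ (M + 1 - i)) b)) (M + 1)]
    have e3 : ∀ i ∈ Finset.range (M + 1),
        (M + 1).choose (i + 1) • ((T ^ (i + 1)) a * (T ^ (M + 1 - (i + 1))) b) =
        M.choose i • ((T ^ (i + 1)) a * (T ^ (M - i)) b)
          + M.choose (i + 1) • ((T ^ (i + 1)) a * (T ^ (M - i)) b) := by
      intro i _
      have hc : (M + 1).choose (i + 1) = M.choose i + M.choose (i + 1) :=
        Nat.choose_succ_succ M i
      have hm : M + 1 - (i + 1) = M - i := by omega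
      rw [hm, hc, add_nsmul]
    rw [Finset.sum_congr rfl e3, Finset.sum_add_distrib]
    have e4 : ∑ i ∈ Finset.range (M + 1), M.choose (i + 1) • ((T ^ (i + 1)) a * (T ^ (M - i)) b)
        = ∑ i ∈ Finset.range M, M.choose (i + 1) • ((T ^ (i + 1)) a * (T ^ (M - i)) b) := by
      rw [Finset.sum_range_succ, Nat.choose_succ_self, zero_smul, add_zero]
    have e5 : ∑ i ∈ Finset.range (M + 1), M.choose i • ((T ^ i) a * (T ^ (M + 1 - i)) b)
        = (∑ i ∈ Finset.range M, M.choose (i + 1) • ((T ^ (i + 1)) a * (T ^ (M - i)) b))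
          + M.choose 0 • ((T ^ 0) a * (T ^ (M + 1)) b) := by
      rw [Finset.sum_range_succ'
        (fun i => M.choose i • ((T ^ i) a * (T ^ (M + 1 - i)) b)) M]
      congr 1
      apply Finset.sum_congr rfl
      intro i hi
      have hm : M + 1 - (i + 1) = M - i := by omega
      rw [hm]
    rw [e4, e5]
    simp only [Nat.choose_zero_right, one_smul, pow_zero, Module.End.one_apply,
      Nat.choose_self, Nat.sub_zero]
    abel

lemma pow_mul_mem (K : Ideal (MvPowerSeries (Fin n) ℂ)) (a b : MvPowerSeries (Fin n) ℂ) (M : ℕ)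
    (H : ∀ i, i ≤ M → (X.toLinearMap ^ i) a * (X.toLinearMap ^ (M - i)) b ∈ K) :
    (X.toLinearMap ^ M) (a * b) ∈ K := by
  rw [deriv_pow_mul]
  apply Ideal.sum_mem
  intro i hi
  rw [Finset.mem_range] at hi
  exact nsmul_mem (H i (by omega)) _

variable (hsing : ∀ g ∈ mIdeal n, X g ∈ mIdeal n)

include hsing in
lemma X_total (g : MvPowerSeries (Fin n) ℂ) : X g ∈ mIdeal n := by
  have hmem : g - algebraMap ℂ (MvPowerSeries (Fin n) ℂ)
      (MvPowerSeries.constantCoeff g) ∈ mIdeal n := by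
    rw [mem_mIdeal, map_sub, MvPowerSeries.algebraMap_apply]
    simp
  have : X g = X (g - algebraMap ℂ (MvPowerSeries (Fin n) ℂ)
      (MvPowerSeries.constantCoeff g)) := by
    rw [map_sub, Derivation.map_algebraMap, sub_zero]
  rw [this]
  exact hsing _ hmem

include hsing in
lemma deriv_mem_pow : ∀ (j : ℕ) (g : MvPowerSeries (Fin n) ℂ),
    g ∈ (mIdeal n) ^ j → X g ∈ (mIdeal n) ^ j := by
  intro j
  induction j with
  | zero => intro g _; simp
  | succ j ih =>
    intro g hg
    rw [pow_succ] at hg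
    refine Submodule.mul_induction_on hg ?_ ?_
    · intro a ha b hb
      have hl : X (a * b) = a * X b + X a * b := by
        rw [X.leibniz, smul_eq_mul, smul_eq_mul]; ring
      rw [hl, pow_succ]
      exact add_mem (Ideal.mul_mem_mul ha (hsing b hb)) (Ideal.mul_mem_mul (ih a ha) hb)
    · intro x y hx hy
      rw [map_add]
      exact add_mem hx hy

include hsing in
lemma iter_mem_pow (j : ℕ) : ∀ (i : ℕ) (g : MvPowerSeries (Fin n) ℂ),
    g ∈ (mIdeal n) ^ j → (X.toLinearMap ^ i) g ∈ (mIdeal n) ^ j := by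
  intro i
  induction i with
  | zero => intro g hg; simpa using hg
  | succ i ih =>
    intro g hg
    rw [pow_succ, Module.End.mul_apply]
    exact ih (X g) (deriv_mem_pow X hsing j g hg)

lemma mul_mem_pows {x y : MvPowerSeries (Fin n) ℂ} {p q r : ℕ}
    (hx : x ∈ (mIdeal n) ^ p) (hy : y ∈ (mIdeal n) ^ q) (hr : r ≤ p + q) :
    x * y ∈ (mIdeal n) ^ r := by
  have := Ideal.mul_mem_mul hx hy
  rw [← pow_add] at this
  exact Ideal.pow_le_pow_right hr this

variable {k : ℕ} (hk : ∀ g ∈ mIdeal n, (X.toLinearMap ^ k) g ∈ (mIdeal n) ^ 2)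

include hsing hk in
lemma iter_nil {g : MvPowerSeries (Fin n) ℂ} (hg : g ∈ mIdeal n) {M : ℕ} (hM : k ≤ M) :
    (X.toLinearMap ^ M) g ∈ (mIdeal n) ^ 2 := by
  obtain ⟨j, rfl⟩ : ∃ j, M = j + k := ⟨M - k, by omega⟩
  rw [pow_add, Module.End.mul_apply]
  exact iter_mem_pow X hsing 2 _ _ (hk g hg)

include hsing hk in
lemma lemS : ∀ (d : ℕ) (g : MvPowerSeries (Fin n) ℂ), g ∈ (mIdeal n) ^ d →
    ∀ M : ℕ, d * k + 1 ≤ M → (X.toLinearMap ^ M) g ∈ (mIdeal n) ^ (d + 1) := by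
  intro d
  induction d with
  | zero =>
    intro g _ M hM
    have : (X.toLinearMap ^ M) g = (X.toLinearMap ^ (M - 1)) (X g) := by
      rw [pow_apply_succ, show M - 1 + 1 = M by omega]
    rw [this]
    have := iter_mem_pow X hsing 1 (M - 1) (X g) (by
      rw [pow_one]; exact X_total X hsing g)
    simpa using this
  | succ d ih =>
    intro g hg M hM
    rw [pow_succ] at hg
    refine Submodule.mul_induction_on hg ?_ ?_
    · intro a ha b hb
      apply pow_mul_mem
      intro i hi
      by_cases hik : k ≤ M - i
      · exact mul_mem_pows (iter_mem_pow X hsing d i a ha)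
          (iter_nil X hsing hk hb hik) (by omega)
      · have hexp : (d + 1) * k = d * k + k := by ring
        have hMi : M - i < k := by omega
        have hi' : d * k + 1 ≤ i := by omega
        exact mul_mem_pows (ih a ha i hi')
          (iter_mem_pow X hsing 1 (M - i) b (by rw [pow_one]; exact hb)) (by omega)
    · intro x y hx hy
      rw [map_add]
      exact add_mem hx hy

end Deriv

end EigenAux

set_option maxHeartbeats 2000000 in
/-- let `X` be a nilpotent formal vector field on `ℂⁿ` singular at `0`
(a ℂ-derivation of `ℂ[[x₁,…,xₙ]]` preserving `m` whose linear part on `m/m²` is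
nilpotent).  If `f, h` are nonzero power series and `λ ∈ ℂ` satisfies
`h·X(f) − f·X(h) = λ·f·h` (i.e. `X(f/h) = λ·(f/h)` in the fraction field), then `λ = 0`. -/
theorem eigenvalue_eq_zero_of_nilpotentVF (n : ℕ) (hn : 1 ≤ n)
    (X : Derivation ℂ (MvPowerSeries (Fin n) ℂ) (MvPowerSeries (Fin n) ℂ))
    (hsing : ∀ f ∈ mIdeal n, X f ∈ mIdeal n)
    (hnilX : ∃ k : ℕ, ∀ f ∈ mIdeal n,
      ((X.toLinearMap : Module.End ℂ (MvPowerSeries (Fin n) ℂ)) ^ k) f ∈ (mIdeal n) ^ 2)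
    (f h : MvPowerSeries (Fin n) ℂ) (hf : f ≠ 0) (hh : h ≠ 0) (lam : ℂ)
    (heig : h * X f - f * X h = lam • (f * h)) :
    lam = 0 := by
  classical
  obtain ⟨k, hk⟩ := hnilX
  by_contra hlam
  obtain ⟨d, hfd, hfd'⟩ := EigenAux.exists_exact hf
  obtain ⟨e, hhe, hhe'⟩ := EigenAux.exists_exact hh
  obtain ⟨a, haP, haG⟩ : ∃ a : ℕ, ((X.toLinearMap ^ a) f ∉ (mIdeal n) ^ (d + 1)) ∧
      ∀ m, a < m → (X.toLinearMap ^ m) f ∈ (mIdeal n) ^ (d + 1) := by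
    refine ⟨Nat.findGreatest (fun m => (X.toLinearMap ^ m) f ∉ (mIdeal n) ^ (d + 1)) (d * k + 1),
      Nat.findGreatest_spec (P := fun m => (X.toLinearMap ^ m) f ∉ (mIdeal n) ^ (d + 1))
        (Nat.zero_le _) (by simpa using hfd'), ?_⟩
    intro m hm
    by_cases hmN : m ≤ d * k + 1
    · have := Nat.findGreatest_is_greatest hm hmN
      rwa [not_not] at this
    · exact EigenAux.lemS X hsing hk d f hfd m (by omega)
  obtain ⟨b, hbP, hbG⟩ : ∃ b : ℕ, ((X.toLinearMap ^ b) h ∉ (mIdeal n) ^ (e + 1)) ∧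
      ∀ m, b < m → (X.toLinearMap ^ m) h ∈ (mIdeal n) ^ (e + 1) := by
    refine ⟨Nat.findGreatest (fun m => (X.toLinearMap ^ m) h ∉ (mIdeal n) ^ (e + 1)) (e * k + 1),
      Nat.findGreatest_spec (P := fun m => (X.toLinearMap ^ m) h ∉ (mIdeal n) ^ (e + 1))
        (Nat.zero_le _) (by simpa using hhe'), ?_⟩
    intro m hm
    by_cases hmN : m ≤ e * k + 1
    · have := Nat.findGreatest_is_greatest hm hmN
      rwa [not_not] at this
    · exact EigenAux.lemS X hsing hk e h hhe m (by omega)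
  have hud : (X.toLinearMap ^ a) f ∈ (mIdeal n) ^ d := EigenAux.iter_mem_pow X hsing d a f hfd
  have hve : (X.toLinearMap ^ b) h ∈ (mIdeal n) ^ e := EigenAux.iter_mem_pow X hsing e b h hhe
  -- Claim 2 : X^{a+b}(h * X f) and X^{a+b}(f * X h) lie in m^{d+e+1}
  have hC2 : (X.toLinearMap ^ (a + b)) (h * X f) ∈ (mIdeal n) ^ (d + e + 1) := by
    apply EigenAux.pow_mul_mem
    intro i hi
    rw [EigenAux.pow_apply_succ]
    by_cases hib : i ≤ b
    · exact EigenAux.mul_mem_pows (EigenAux.iter_mem_pow X hsing e i h hhe)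
        (haG _ (by omega)) (by omega)
    · exact EigenAux.mul_mem_pows (hbG i (by omega))
        (EigenAux.iter_mem_pow X hsing d _ f hfd) (by omega)
  have hC2' : (X.toLinearMap ^ (a + b)) (f * X h) ∈ (mIdeal n) ^ (d + e + 1) := by
    apply EigenAux.pow_mul_mem
    intro i hi
    rw [EigenAux.pow_apply_succ]
    by_cases hia : i ≤ a
    · exact EigenAux.mul_mem_pows (EigenAux.iter_mem_pow X hsing d i f hfd)
        (hbG _ (by omega)) (by omega)
    · exact EigenAux.mul_mem_pows (haG i (by omega))
        (EigenAux.iter_mem_pow X hsing e _ h hhe) (by omega)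
  -- Claim 1
  have hC1 : (X.toLinearMap ^ (a + b)) (f * h) -
      ((a + b).choose a) • ((X.toLinearMap ^ a) f * (X.toLinearMap ^ b) h)
      ∈ (mIdeal n) ^ (d + e + 1) := by
    rw [EigenAux.deriv_pow_mul]
    have hmem : a ∈ Finset.range (a + b + 1) := by
      rw [Finset.mem_range]; omega
    rw [← Finset.sum_erase_add _ _ hmem, Nat.add_sub_cancel_left, add_sub_cancel_right]
    apply Ideal.sum_mem
    intro i hi
    rw [Finset.mem_erase, Finset.mem_range] at hi
    obtain ⟨hine, hilt⟩ := hi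
    apply nsmul_mem
    rcases Nat.lt_or_ge i a with hlt | hge
    · exact EigenAux.mul_mem_pows (EigenAux.iter_mem_pow X hsing d i f hfd)
        (hbG _ (by omega)) (by omega)
    · have hgt : a < i := by omega
      exact EigenAux.mul_mem_pows (haG i hgt)
        (EigenAux.iter_mem_pow X hsing e _ h hhe) (by omega)
  -- assemble
  have happ := congrArg (X.toLinearMap ^ (a + b)) heig
  rw [map_sub, map_smul] at happ
  have hsm : lam • (X.toLinearMap ^ (a + b)) (f * h) ∈ (mIdeal n) ^ (d + e + 1) := by
    rw [← happ]; exact sub_mem hC2 hC2'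
  have hfh : (X.toLinearMap ^ (a + b)) (f * h) ∈ (mIdeal n) ^ (d + e + 1) := by
    have h2 : (lam⁻¹ : ℂ) • (lam • (X.toLinearMap ^ (a + b)) (f * h))
        ∈ (mIdeal n) ^ (d + e + 1) := by
      rw [Algebra.smul_def]
      exact Ideal.mul_mem_left _ _ hsm
    rwa [smul_smul, inv_mul_cancel₀ hlam, one_smul] at h2
  have hC : ((a + b).choose a) • ((X.toLinearMap ^ a) f * (X.toLinearMap ^ b) h)
      ∈ (mIdeal n) ^ (d + e + 1) := by
    have := sub_mem hfh hC1
    rwa [sub_sub_cancel] at this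
  have huv : (X.toLinearMap ^ a) f * (X.toLinearMap ^ b) h ∈ (mIdeal n) ^ (d + e + 1) := by
    have hc0 : (((a + b).choose a : ℕ) : ℂ) ≠ 0 :=
      Nat.cast_ne_zero.mpr (Nat.choose_pos (by omega)).ne'
    have h1 : (((a + b).choose a : ℕ) : ℂ) • ((X.toLinearMap ^ a) f * (X.toLinearMap ^ b) h)
        ∈ (mIdeal n) ^ (d + e + 1) := by
      rwa [Nat.cast_smul_eq_nsmul]
    have h2 : ((((a + b).choose a : ℕ) : ℂ))⁻¹ •
        ((((a + b).choose a : ℕ) : ℂ) • ((X.toLinearMap ^ a) f * (X.toLinearMap ^ b) h))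
        ∈ (mIdeal n) ^ (d + e + 1) := by
      rw [Algebra.smul_def]
      exact Ideal.mul_mem_left _ _ h1
    rwa [smul_smul, inv_mul_cancel₀ hc0, one_smul] at h2
  exact EigenAux.mul_not_mem_pow hud haP hve hbP huv
end

section
/- Let n ≥ 1, let A = (a_{ij}) be a nilpotent n×n complex matrix and let Y be the ℂ-derivation of the polynomial ring ℂ[x₁,…,xₙ] determined by Y(xᵢ) = Σⱼ a_{ij}·xⱼ. If α ∈ ℂ[x₁,…,xₙ] is a nonzero homogeneous polynomial and μ ∈ ℂ satisfies Y(α) = μ·α, then μ = 0. -/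
/-- Iterated Leibniz nilpotency: if a derivation kills `p` after `a` steps and `q`
after `b` steps, it kills `p*q` after `a+b` steps. -/
lemma deriv_pow_mul_eq_zero {R B : Type*} [CommRing R] [CommRing B] [Algebra R B]
    (Y : Derivation R B B) :
    ∀ (N a b : ℕ), a + b = N → ∀ p q : B,
      (Y.toLinearMap ^ a) p = 0 → (Y.toLinearMap ^ b) q = 0 →
      (Y.toLinearMap ^ N) (p * q) = 0 := by
  intro N
  induction N with
  | zero =>
    intro a b hab p q hp hq
    obtain ⟨rfl, rfl⟩ : a = 0 ∧ b = 0 := by omega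
    simp only [pow_zero, Module.End.one_apply] at hp hq ⊢
    simp [hp, hq]
  | succ N ih =>
    intro a b hab p q hp hq
    rcases Nat.eq_zero_or_pos a with rfl | ha
    · simp only [pow_zero, Module.End.one_apply] at hp
      simp [hp]
    rcases Nat.eq_zero_or_pos b with rfl | hb
    · simp only [pow_zero, Module.End.one_apply] at hq
      simp [hq]
    have hL : Y.toLinearMap (p * q) = p * Y q + Y p * q := by
      show Y (p * q) = _
      rw [Y.leibniz, smul_eq_mul, smul_eq_mul]
      ring
    have hmul : (Y.toLinearMap ^ (N + 1)) (p * q)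
        = (Y.toLinearMap ^ N) (p * Y q) + (Y.toLinearMap ^ N) (Y p * q) := by
      rw [pow_succ, Module.End.mul_apply, hL, map_add]
    rw [hmul]
    have h1 : (Y.toLinearMap ^ N) (p * Y q) = 0 := by
      refine ih a (b - 1) (by omega) p (Y q) hp ?_
      calc (Y.toLinearMap ^ (b - 1)) (Y q)
          = ((Y.toLinearMap ^ (b - 1)) * Y.toLinearMap) q := rfl
        _ = (Y.toLinearMap ^ b) q := by rw [← pow_succ, Nat.sub_add_cancel hb]
        _ = 0 := hq
    have h2 : (Y.toLinearMap ^ N) (Y p * q) = 0 := by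
      refine ih (a - 1) b (by omega) (Y p) q ?_ hq
      calc (Y.toLinearMap ^ (a - 1)) (Y p)
          = ((Y.toLinearMap ^ (a - 1)) * Y.toLinearMap) p := rfl
        _ = (Y.toLinearMap ^ a) p := by rw [← pow_succ, Nat.sub_add_cancel ha]
        _ = 0 := hp
    rw [h1, h2, add_zero]

/-- let `A` be a nilpotent `n×n` complex matrix and `Y` the ℂ-derivation
of the polynomial ring `ℂ[x₁,…,xₙ]` with `Y(xᵢ) = Σⱼ aᵢⱼ·xⱼ`.  If `α` is a nonzero
homogeneous polynomial and `Y(α) = μ·α` for some `μ ∈ ℂ`, then `μ = 0`. -/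
theorem eigenvalue_eq_zero_of_nilpotent_linear_derivation (n : ℕ) (hn : 1 ≤ n)
    (A : Matrix (Fin n) (Fin n) ℂ) (hA : IsNilpotent A)
    (Y : Derivation ℂ (MvPolynomial (Fin n) ℂ) (MvPolynomial (Fin n) ℂ))
    (hY : ∀ i, Y (MvPolynomial.X i) =
      ∑ j : Fin n, MvPolynomial.C (A i j) * MvPolynomial.X j)
    (α : MvPolynomial (Fin n) ℂ) (d : ℕ) (hα : α.IsHomogeneous d) (hα0 : α ≠ 0)
    (μ : ℂ) (heig : Y α = μ • α) :
    μ = 0 := by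
  classical
  obtain ⟨k, hk⟩ := hA
  set T := Y.toLinearMap with hT
  -- iterates on variables follow matrix powers
  have iterX : ∀ (m : ℕ) (i : Fin n),
      (T ^ m) (MvPolynomial.X i) = ∑ j : Fin n, (A ^ m) i j • MvPolynomial.X j := by
    intro m
    induction m with
    | zero =>
      intro i
      simp [Matrix.one_apply, MvPolynomial.smul_eq_C_mul]
    | succ m ih =>
      intro i
      have hstep : (T ^ (m + 1)) (MvPolynomial.X i) = (T ^ m) (T (MvPolynomial.X i)) := by
        rw [pow_succ, Module.End.mul_apply]
      rw [hstep]
      have hYX : T (MvPolynomial.X i) = ∑ j : Fin n, A i j • MvPolynomial.X j := by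
        show Y (MvPolynomial.X i) = _
        simpa [MvPolynomial.smul_eq_C_mul] using hY i
      rw [hYX, map_sum]
      simp only [map_smul, ih]
      have hj : ∀ j : Fin n, A i j • ∑ l : Fin n, (A ^ m) j l • (MvPolynomial.X l : MvPolynomial (Fin n) ℂ)
          = ∑ l : Fin n, (A i j * (A ^ m) j l) • (MvPolynomial.X l : MvPolynomial (Fin n) ℂ) := by
        intro j
        rw [Finset.smul_sum]
        simp [smul_smul]
      simp only [hj]
      rw [Finset.sum_comm]
      refine Finset.sum_congr rfl fun l _ => ?_
      rw [← Finset.sum_smul, pow_succ', Matrix.mul_apply]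
  -- local nilpotency
  have loc : ∀ p : MvPolynomial (Fin n) ℂ, ∃ N, (T ^ N) p = 0 := by
    intro p
    induction p using MvPolynomial.induction_on with
    | C a =>
      refine ⟨1, ?_⟩
      rw [pow_one]
      have : (MvPolynomial.C a : MvPolynomial (Fin n) ℂ)
          = algebraMap ℂ (MvPolynomial (Fin n) ℂ) a := rfl
      simp [hT, this]
    | add p q hp hq =>
      obtain ⟨Np, hp⟩ := hp
      obtain ⟨Nq, hq⟩ := hq
      refine ⟨Np + Nq, ?_⟩
      rw [map_add]
      have e1 : (T ^ (Np + Nq)) p = (T ^ Nq) ((T ^ Np) p) := by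
        rw [add_comm, pow_add, Module.End.mul_apply]
      have e2 : (T ^ (Np + Nq)) q = (T ^ Np) ((T ^ Nq) q) := by
        rw [pow_add, Module.End.mul_apply]
      rw [e1, e2, hp, hq, map_zero, map_zero, add_zero]
    | mul_X p i hp =>
      obtain ⟨Np, hp⟩ := hp
      refine ⟨Np + k, ?_⟩
      refine deriv_pow_mul_eq_zero Y (Np + k) Np k rfl p (MvPolynomial.X i) hp ?_
      rw [iterX k i, hk]
      simp
  -- eigen-iteration
  have iter_eig : ∀ m : ℕ, (T ^ m) α = μ ^ m • α := by
    intro m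
    induction m with
    | zero => simp
    | succ m ih =>
      have hstep : (T ^ (m + 1)) α = (T ^ m) (T α) := by
        rw [pow_succ, Module.End.mul_apply]
      have hTα : T α = μ • α := heig
      rw [hstep, hTα, map_smul, ih, smul_smul, ← pow_succ']
  obtain ⟨N, hN⟩ := loc α
  rw [iter_eig N] at hN
  rcases smul_eq_zero.mp hN with h | h
  · exact (pow_eq_zero_iff'.mp h).1
  · exact absurd h hα0
end

section
/- Fix n ≥ 1 and consider the following subspaces of the Lie algebra of formal vector fields on ℂⁿ singular at 0: for 1 ≤ j ≤ n−1, Uⱼ = { a·∂/∂xⱼ : a ∈ m², a ∈ ℂ[[x_{j+1},…,xₙ]] } and Vⱼ = { xⱼ·b·∂/∂xⱼ : b ∈ m, b ∈ ℂ[[x_{j+1},…,xₙ]] }, together with Uₙ = { t·xₙ²·∂/∂xₙ : t ∈ ℂ } and Vₙ = { t·xₙ·∂/∂xₙ : t ∈ ℂ }. Let G₀ = U₁ + V₁ + … + Uₙ + Vₙ. Then G₀ is a Lie subalgebra of X̂(ℂⁿ,0) whose derived length is exactly 2n: the 2n-th derived algebra G₀⁽²ⁿ⁾ is zero while G₀⁽²ⁿ⁻¹⁾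 is nonzero. -/
set_option maxHeartbeats 1000000
set_option synthInstance.maxHeartbeats 400000


/-- `a` involves only the variables `x_i` with `i > j`, i.e. `a ∈ ℂ[[x_{j+1},…,xₙ]]`:
every monomial of `a` containing a variable `x_i` with `i ≤ j` has zero coefficient. -/
def OnlyVarsAfter (n : ℕ) (j : Fin n) (a : MvPowerSeries (Fin n) ℂ) : Prop :=
  ∀ d : Fin n →₀ ℕ, (∃ i : Fin n, i ≤ j ∧ d i ≠ 0) → (MvPowerSeries.coeff d : MvPowerSeries (Fin n) ℂ →ₗ[ℂ] ℂ) a = 0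

namespace S11
open MvPowerSeries Finsupp

variable {n : ℕ}

abbrev Rn (n : ℕ) := MvPowerSeries (Fin n) ℂ

/-- total degree of an exponent -/
def deg (d : Fin n →₀ ℕ) : ℕ := ∑ i, d i

lemma deg_add (d e : Fin n →₀ ℕ) : deg (d + e) = deg d + deg e := by
  simp [deg, Finsupp.add_apply, Finset.sum_add_distrib]

lemma le_deg (d : Fin n →₀ ℕ) (i : Fin n) : d i ≤ deg d :=
  Finset.single_le_sum (fun _ _ => Nat.zero_le _) (Finset.mem_univ i)

lemma deg_eq_zero {d : Fin n →₀ ℕ} (h : deg d = 0) : d = 0 := by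
  ext i
  have := le_deg d i
  simp only [Finsupp.coe_zero, Pi.zero_apply]
  omega

lemma mem_mIdeal {f : Rn n} : f ∈ mIdeal n ↔ MvPowerSeries.coeff 0 f = 0 := by
  rw [mIdeal, RingHom.mem_ker, ← MvPowerSeries.coeff_zero_eq_constantCoeff_apply]

/-- the subalgebra of power series using only variables with index `≥ c`. -/
noncomputable def varsGE (n c : ℕ) : Subalgebra ℂ (Rn n) where
  carrier := {f | ∀ d : Fin n →₀ ℕ, (∃ i : Fin n, (i : ℕ) < c ∧ d i ≠ 0) →
    MvPowerSeries.coeff d f = 0}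
  add_mem' := by
    intro f g hf hg d hd
    simp [map_add, hf d hd, hg d hd]
  mul_mem' := by
    classical
    intro f g hf hg d hd
    rw [MvPowerSeries.coeff_mul]
    apply Finset.sum_eq_zero
    rintro ⟨p, q⟩ hpq
    rw [Finset.HasAntidiagonal.mem_antidiagonal] at hpq
    obtain ⟨i, hi, hdi⟩ := hd
    have : p i ≠ 0 ∨ q i ≠ 0 := by
      by_contra h
      push_neg at h
      apply hdi
      rw [← hpq]
      simp [Finsupp.add_apply, h.1, h.2]
    rcases this with h | h
    · rw [hf p ⟨i, hi, h⟩, zero_mul]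
    · rw [hg q ⟨i, hi, h⟩, mul_zero]
  algebraMap_mem' := by
    intro c d hd
    obtain ⟨i, hi, hdi⟩ := hd
    have hd0 : d ≠ 0 := by
      intro h
      exact hdi (by simp [h])
    simpa [MvPowerSeries.algebraMap_apply, MvPowerSeries.coeff_C, hd0] using fun h => (hd0 h).elim

lemma varsGE_mono {c c' : ℕ} (h : c' ≤ c) : varsGE n c ≤ varsGE n c' := by
  intro f hf d hd
  obtain ⟨i, hi, hdi⟩ := hd
  exact hf d ⟨i, lt_of_lt_of_le hi h, hdi⟩

lemma mem_varsGE_zero (f : Rn n) : f ∈ varsGE n 0 := by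
  intro d hd
  obtain ⟨i, hi, _⟩ := hd
  omega

lemma X_mem_varsGE {c : ℕ} {i : Fin n} (h : c ≤ (i : ℕ)) : (X i : Rn n) ∈ varsGE n c := by
  classical
  intro d hd
  obtain ⟨i', hi', hdi'⟩ := hd
  rw [MvPowerSeries.coeff_X]
  split
  · rename_i hd'
    subst hd'
    rw [Finsupp.single_apply] at hdi'
    split at hdi'
    · omega
    · simp at hdi'
  · rfl

lemma X_mem_mIdeal (i : Fin n) : (X i : Rn n) ∈ mIdeal n := by
  rw [mem_mIdeal]
  classical
  rw [MvPowerSeries.coeff_X]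
  rw [if_neg]
  intro h
  have := congrArg (fun d => d i) h
  simp at this

lemma monomial_mem_varsGE {c : ℕ} {d : Fin n →₀ ℕ} {a : ℂ}
    (h : ∀ i : Fin n, (i : ℕ) < c → d i = 0) : (monomial d a : Rn n) ∈ varsGE n c := by
  classical
  intro e he
  obtain ⟨i, hi, hei⟩ := he
  rw [MvPowerSeries.coeff_monomial]
  split
  · rename_i h'
    subst h'
    exact absurd (h i hi) hei
  · rfl

/-- coefficients of elements of `m^k` vanish in degrees `< k`. -/
lemma coeff_eq_zero_of_mem_pow {k : ℕ} {f : Rn n} (hf : f ∈ (mIdeal n) ^ k)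
    {d : Fin n →₀ ℕ} (hd : deg d < k) : MvPowerSeries.coeff d f = 0 := by
  classical
  induction k generalizing f d with
  | zero => omega
  | succ k ih =>
    rw [pow_succ] at hf
    induction hf using Submodule.mul_induction_on' with
    | mem_mul_mem a ha b hb =>
      rw [MvPowerSeries.coeff_mul]
      apply Finset.sum_eq_zero
      rintro ⟨p, q⟩ hpq
      rw [Finset.HasAntidiagonal.mem_antidiagonal] at hpq
      by_cases hq : q = 0
      · subst hq
        rw [mem_mIdeal.mp hb, mul_zero]
      · have hq1 : 1 ≤ deg q := by
          rcases Nat.eq_zero_or_pos (deg q) with h | h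
          · exact absurd (deg_eq_zero h) hq
          · omega
        have : deg p < k := by
          have := deg_add p q
          rw [hpq] at this
          omega
        rw [ih ha this, zero_mul]
    | add a ha b hb iha ihb =>
      rw [map_add, iha, ihb, add_zero]



lemma deg_single (i : Fin n) (k : ℕ) : deg (single i k) = k := by
  classical
  rw [deg, Finset.sum_eq_single i]
  · simp
  · intro b _ hb
    exact Finsupp.single_eq_of_ne' (Ne.symm hb)
  · intro h
    exact absurd (Finset.mem_univ i) h

lemma exists_decomp {f : Rn n} (hf : MvPowerSeries.coeff 0 f = 0) :
    ∃ g : Fin n → Rn n, (∀ i d, MvPowerSeries.coeff d (g i) = 0 ∨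
      MvPowerSeries.coeff d (g i) = MvPowerSeries.coeff (d + single i 1) f) ∧
    f = ∑ i, X i * g i := by
  classical
  set g : Fin n → Rn n := fun i =>
    (fun d => if ∀ i' : Fin n, i' < i → d i' = 0
      then MvPowerSeries.coeff (d + single i 1) f else 0 : (Fin n →₀ ℕ) → ℂ) with hg
  have hgcoeff : ∀ i d, MvPowerSeries.coeff d (g i) =
      if ∀ i' : Fin n, i' < i → d i' = 0
      then MvPowerSeries.coeff (d + single i 1) f else 0 := fun i d => rfl
  refine ⟨g, fun i d => ?_, ?_⟩
  · rw [hgcoeff]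
    split
    · right; rfl
    · left; rfl
  · ext e
    rw [map_sum]
    by_cases he : e = 0
    · subst he
      rw [hf]
      apply (Finset.sum_eq_zero ?_).symm
      intro i _
      rw [X_def, coeff_monomial_mul, if_neg]
      intro hle
      have := Finsupp.single_le_iff.mp hle
      simp at this
    · have hsupp : e.support.Nonempty := Finsupp.support_nonempty_iff.mpr he
      set i₀ := e.support.min' hsupp with hi₀
      have hi₀mem : i₀ ∈ e.support := Finset.min'_mem _ _
      have hei₀ : e i₀ ≠ 0 := Finsupp.mem_support_iff.mp hi₀mem
      have hmin : ∀ i' : Fin n, i' < i₀ → e i' = 0 := by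
        intro i' hi'
        by_contra h
        exact absurd (Finset.min'_le _ _ (Finsupp.mem_support_iff.mpr h)) (not_le.mpr hi')
      rw [Finset.sum_eq_single i₀]
      · rw [X_def, coeff_monomial_mul, if_pos (Finsupp.single_le_iff.mpr (Nat.one_le_iff_ne_zero.mpr hei₀)),
          one_mul, hgcoeff, if_pos, tsub_add_cancel_of_le (Finsupp.single_le_iff.mpr (Nat.one_le_iff_ne_zero.mpr hei₀))]
        intro i' hi'
        rw [Finsupp.tsub_apply, Finsupp.single_eq_of_ne' (Ne.symm (ne_of_lt hi')), hmin i' hi']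
        simp
      · intro i _ hi
        rw [X_def, coeff_monomial_mul]
        split
        · rename_i hle
          have h1 : e i ≠ 0 := by
            have := Finsupp.single_le_iff.mp hle
            omega
          have hii : i₀ < i := by
            rcases lt_trichotomy i i₀ with h | h | h
            · exact absurd (hmin i h) h1
            · exact absurd h hi
            · exact h
          rw [hgcoeff, if_neg, mul_zero]
          intro hall
          have := hall i₀ hii
          rw [Finsupp.tsub_apply, Finsupp.single_eq_of_ne' (ne_of_gt hii)] at this
          omega
        · rfl
      · intro h
        exact absurd (Finset.mem_univ i₀) h

lemma mem_pow_of_order {k : ℕ} {f : Rn n}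
    (hf : ∀ d, deg d < k → MvPowerSeries.coeff d f = 0) : f ∈ (mIdeal n) ^ k := by
  induction k generalizing f with
  | zero => simp
  | succ k ih =>
    have h0 : MvPowerSeries.coeff 0 f = 0 := by
      apply hf
      show deg (0 : Fin n →₀ ℕ) < k + 1
      have : deg (0 : Fin n →₀ ℕ) = 0 := by simp [deg]
      omega
    obtain ⟨g, hgc, rfl⟩ := exists_decomp h0
    apply Ideal.sum_mem
    intro i _
    rw [pow_succ']
    apply Ideal.mul_mem_mul (X_mem_mIdeal i)
    apply ih
    intro d hd
    rcases hgc i d with h | h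
    · exact h
    · rw [h]
      apply hf
      rw [deg_add, deg_single]
      omega

lemma monomial_eq_smul_prod (d : Fin n →₀ ℕ) (a : ℂ) :
    (monomial d a : Rn n) = a • ∏ i : Fin n, (X i : Rn n) ^ d i := by
  classical
  have key : ∀ s : Finset (Fin n), (∏ i ∈ s, (X i : Rn n) ^ d i) =
      monomial (∑ i ∈ s, single i (d i)) 1 := by
    intro s
    induction s using Finset.induction_on with
    | empty => simp [MvPowerSeries.monomial_zero_eq_C_apply]
    | insert _ _ hni ih =>
      rename_i j s'
      rw [Finset.prod_insert hni, ih, X_pow_eq, monomial_mul_monomial, one_mul,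
        Finset.sum_insert hni]
  rw [key Finset.univ]
  have : (∑ i : Fin n, single i (d i)) = d := by
    ext i'
    rw [Finsupp.finset_sum_apply, Finset.sum_eq_single i']
    · simp
    · intro b _ hb
      exact Finsupp.single_eq_of_ne' hb
    · intro h
      exact absurd (Finset.mem_univ i') h
  rw [this]
  ext e
  by_cases he : e = d <;> simp [MvPowerSeries.coeff_monomial, he]

lemma exists_approx (hn : 1 ≤ n) (c k : ℕ) (f : Rn n) (hf : f ∈ varsGE n c) :
    ∃ p : Rn n, p ∈ Algebra.adjoin ℂ {g : Rn n | ∃ i : Fin n, c ≤ (i : ℕ) ∧ g = X i} ∧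
      f - p ∈ (mIdeal n) ^ k := by
  classical
  set bound : Fin n →₀ ℕ := equivFunOnFinite.symm (fun _ => k) with hbound
  have hboundapp : ∀ i, bound i = k := fun i => rfl
  set p : Rn n := ∑ d ∈ Finset.Iio bound, (monomial d (MvPowerSeries.coeff d f) : Rn n)
    with hp
  have hpc : ∀ e, MvPowerSeries.coeff e p =
      if e ∈ Finset.Iio bound then MvPowerSeries.coeff e f else 0 := by
    intro e
    rw [hp, map_sum]
    by_cases hmem : e ∈ Finset.Iio bound
    · rw [if_pos hmem, Finset.sum_eq_single e]
      · rw [coeff_monomial_same]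
      · intro b _ hb
        exact MvPowerSeries.coeff_monomial_ne (Ne.symm hb) _
      · intro h
        exact absurd hmem h
    · rw [if_neg hmem]
      apply Finset.sum_eq_zero
      intro b hb
      apply MvPowerSeries.coeff_monomial_ne
      intro h
      exact hmem (h ▸ hb)
  refine ⟨p, ?_, ?_⟩
  · apply Subalgebra.sum_mem
    intro d hd
    by_cases hcf : MvPowerSeries.coeff d f = 0
    · rw [hcf, map_zero]
      exact Subalgebra.zero_mem _
    · have hgood : ∀ i : Fin n, (i : ℕ) < c → d i = 0 := by
        intro i hi
        by_contra h
        exact hcf (hf d ⟨i, hi, h⟩)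
      rw [monomial_eq_smul_prod]
      apply Subalgebra.smul_mem
      apply Subalgebra.prod_mem
      intro i _
      by_cases hdi : d i = 0
      · rw [hdi, pow_zero]; exact Subalgebra.one_mem _
      · apply Subalgebra.pow_mem
        apply Algebra.subset_adjoin
        refine ⟨i, ?_, rfl⟩
        by_contra h
        exact hdi (hgood i (by omega))
  · apply mem_pow_of_order
    intro d hd
    rw [map_sub, hpc]
    split
    · ring
    · rename_i hnot
      rw [sub_eq_zero]
      symm
      exfalso
      apply hnot
      rw [Finset.mem_Iio]
      constructor
      · rw [Finsupp.le_iff]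
        intro i _
        rw [hboundapp]
        have := le_deg d i
        omega
      · intro h
        have h1 : k ≤ d ⟨0, by omega⟩ := by
          have := Finsupp.le_def.mp h ⟨0, by omega⟩
          rw [hboundapp] at this
          exact this
        have := le_deg d ⟨0, by omega⟩
        omega


section Derivations

variable {n : ℕ}

lemma derivation_pow {X : Derivation ℂ (Rn n) (Rn n)} {k : ℕ} {f : Rn n}
    (hf : f ∈ (mIdeal n) ^ (k + 1)) : X f ∈ (mIdeal n) ^ k := by
  induction k generalizing f with
  | zero => simp
  | succ k ih =>
    rw [pow_succ] at hf
    refine Submodule.mul_induction_on hf (fun a ha b hb => ?_) (fun x y hx hy => ?_)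
    · rw [Derivation.leibniz, smul_eq_mul, smul_eq_mul]
      apply add_mem
      · exact Ideal.mul_mem_right _ _ ha
      · rw [pow_succ']
        exact Ideal.mul_mem_mul hb (ih ha)
    · rw [map_add]
      exact add_mem hx hy

lemma derivation_adjoin {X : Derivation ℂ (Rn n) (Rn n)} {c : ℕ}
    (hX : ∀ i : Fin n, c ≤ (i : ℕ) →
      X (MvPowerSeries.X i) ∈ mIdeal n ∧ X (MvPowerSeries.X i) ∈ varsGE n c)
    {p : Rn n}
    (hp : p ∈ Algebra.adjoin ℂ {g : Rn n | ∃ i : Fin n, c ≤ (i : ℕ) ∧ g = MvPowerSeries.X i}) :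
    X p ∈ mIdeal n ∧ X p ∈ varsGE n c := by
  have key : X p ∈ mIdeal n ∧ X p ∈ varsGE n c ∧ p ∈ varsGE n c := by
    induction hp using Algebra.adjoin_induction with
    | mem g hg =>
      obtain ⟨i, hi, rfl⟩ := hg
      exact ⟨(hX i hi).1, (hX i hi).2, X_mem_varsGE hi⟩
    | algebraMap r =>
      rw [Derivation.map_algebraMap]
      exact ⟨zero_mem _, Subalgebra.zero_mem _, Subalgebra.algebraMap_mem _ r⟩
    | add a b _ _ iha ihb =>
      rw [map_add]
      exact ⟨add_mem iha.1 ihb.1, Subalgebra.add_mem _ iha.2.1 ihb.2.1,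
        Subalgebra.add_mem _ iha.2.2 ihb.2.2⟩
    | mul a b _ _ iha ihb =>
      rw [Derivation.leibniz, smul_eq_mul, smul_eq_mul]
      refine ⟨add_mem (Ideal.mul_mem_left _ _ ihb.1) (Ideal.mul_mem_left _ _ iha.1),
        Subalgebra.add_mem _ (Subalgebra.mul_mem _ iha.2.2 ihb.2.1)
          (Subalgebra.mul_mem _ ihb.2.2 iha.2.1),
        Subalgebra.mul_mem _ iha.2.2 ihb.2.2⟩
  exact ⟨key.1, key.2.1⟩

lemma derivation_mem (hn : 1 ≤ n) {X : Derivation ℂ (Rn n) (Rn n)} {c : ℕ}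
    (hX : ∀ i : Fin n, c ≤ (i : ℕ) →
      X (MvPowerSeries.X i) ∈ mIdeal n ∧ X (MvPowerSeries.X i) ∈ varsGE n c)
    {f : Rn n} (hf : f ∈ varsGE n c) : X f ∈ mIdeal n ∧ X f ∈ varsGE n c := by
  constructor
  · obtain ⟨p, hp, hr⟩ := exists_approx hn c 2 f hf
    have h1 : X f = X p + X (f - p) := by rw [← map_add]; congr 1; ring
    rw [h1]
    apply add_mem (derivation_adjoin hX hp).1
    have h2 : X (f - p) ∈ (mIdeal n) ^ 1 := derivation_pow (by rwa [one_add_one_eq_two])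
    rwa [pow_one] at h2
  · intro d hd
    obtain ⟨p, hp, hr⟩ := exists_approx hn c (deg d + 2) f hf
    have h1 : X f = X p + X (f - p) := by rw [← map_add]; congr 1; ring
    rw [h1, map_add, (derivation_adjoin hX hp).2 d hd, zero_add]
    have h2 : X (f - p) ∈ (mIdeal n) ^ (deg d + 1) := derivation_pow hr
    exact coeff_eq_zero_of_mem_pow h2 (by omega)

lemma derivation_zero_on (hn : 1 ≤ n) {X : Derivation ℂ (Rn n) (Rn n)} {c : ℕ}
    (hX : ∀ i : Fin n, c ≤ (i : ℕ) → X (MvPowerSeries.X i) = 0)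
    {f : Rn n} (hf : f ∈ varsGE n c) : X f = 0 := by
  have adj : ∀ p ∈ Algebra.adjoin ℂ
      {g : Rn n | ∃ i : Fin n, c ≤ (i : ℕ) ∧ g = MvPowerSeries.X i}, X p = 0 := by
    intro p hp
    induction hp using Algebra.adjoin_induction with
    | mem g hg =>
      obtain ⟨i, hi, rfl⟩ := hg
      exact hX i hi
    | algebraMap r => rw [Derivation.map_algebraMap]
    | add a b _ _ iha ihb => rw [map_add, iha, ihb, add_zero]
    | mul a b _ _ iha ihb => rw [Derivation.leibniz, iha, ihb, smul_zero, smul_zero, add_zero]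
  apply MvPowerSeries.ext
  intro d
  obtain ⟨p, hp, hr⟩ := exists_approx hn c (deg d + 2) f hf
  have h1 : X f = X p + X (f - p) := by rw [← map_add]; congr 1; ring
  rw [h1, map_add, adj p hp, map_zero, zero_add]
  have h2 : X (f - p) ∈ (mIdeal n) ^ (deg d + 1) := derivation_pow hr
  rw [coeff_eq_zero_of_mem_pow h2 (by omega)]

lemma derivation_ext (hn : 1 ≤ n) {X Y : Derivation ℂ (Rn n) (Rn n)}
    (h : ∀ i : Fin n, X (MvPowerSeries.X i) = Y (MvPowerSeries.X i)) : X = Y := by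
  have h0 : ∀ f, (X - Y) f = 0 := fun f =>
    derivation_zero_on hn (c := 0) (fun i _ => by rw [Derivation.sub_apply, h i, sub_self])
      (mem_varsGE_zero f)
  ext f
  have := h0 f
  rw [Derivation.sub_apply, sub_eq_zero] at this
  rw [this]

lemma derivation_mem_m (hn : 1 ≤ n) {X : Derivation ℂ (Rn n) (Rn n)}
    (hX : ∀ i : Fin n, X (MvPowerSeries.X i) ∈ mIdeal n) (f : Rn n) : X f ∈ mIdeal n :=
  (derivation_mem hn (c := 0) (fun i _ => ⟨hX i, mem_varsGE_zero _⟩) (mem_varsGE_zero f)).1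

lemma derivation_mem_sq (hn : 1 ≤ n) {X : Derivation ℂ (Rn n) (Rn n)}
    (hX : ∀ i : Fin n, X (MvPowerSeries.X i) ∈ mIdeal n)
    {f : Rn n} (hf : f ∈ (mIdeal n) ^ 2) : X f ∈ (mIdeal n) ^ 2 := by
  rw [pow_two] at hf ⊢
  refine Submodule.mul_induction_on hf (fun a ha b hb => ?_) (fun x y hx hy => ?_)
  · rw [Derivation.leibniz, smul_eq_mul, smul_eq_mul]
    exact add_mem (Ideal.mul_mem_mul ha (derivation_mem_m hn hX b))
      (Ideal.mul_mem_mul hb (derivation_mem_m hn hX a))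
  · rw [map_add]
    exact add_mem hx hy

end Derivations

section Pd

variable {n : ℕ}

/-- the exponent of `x_j`. -/
@[reducible] noncomputable def eS (j : Fin n) : Fin n →₀ ℕ := Finsupp.single j 1

lemma eS_apply_same (j : Fin n) : eS j j = 1 := Finsupp.single_eq_same

lemma eS_apply_ne {j i : Fin n} (h : i ≠ j) : eS j i = 0 :=
  Finsupp.single_eq_of_ne' (Ne.symm h)

noncomputable def pdFun (j : Fin n) (f : Rn n) : Rn n :=
  fun d => ((d j + 1 : ℕ) : ℂ) * MvPowerSeries.coeff (d + eS j) f

lemma coeff_pdFun (j : Fin n) (f : Rn n) (d : Fin n →₀ ℕ) :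
    MvPowerSeries.coeff d (pdFun j f) =
      ((d j + 1 : ℕ) : ℂ) * MvPowerSeries.coeff (d + eS j) f := rfl

lemma pdFun_aux (j : Fin n) (d : Fin n →₀ ℕ) (f g : Rn n) :
    ∑ pq ∈ Finset.HasAntidiagonal.antidiagonal (d + eS j),
        ((pq.2 j : ℕ) : ℂ) * (MvPowerSeries.coeff pq.1 f * MvPowerSeries.coeff pq.2 g) =
      ∑ pq ∈ Finset.HasAntidiagonal.antidiagonal d,
        ((pq.2 j + 1 : ℕ) : ℂ) *
          (MvPowerSeries.coeff pq.1 f * MvPowerSeries.coeff (pq.2 + eS j) g) := by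
  classical
  have hfil : ∀ pq ∈ Finset.HasAntidiagonal.antidiagonal (d + eS j),
      ((pq.2 j : ℕ) : ℂ) * (MvPowerSeries.coeff pq.1 f * MvPowerSeries.coeff pq.2 g) ≠ 0 →
      pq.2 j ≠ 0 := by
    rintro ⟨p, q⟩ _ hne h0
    apply hne
    rw [h0]
    norm_num
  rw [← Finset.sum_filter_of_ne hfil]
  apply Finset.sum_nbij' (i := fun pq => (pq.1, pq.2 - eS j))
    (j := fun pq => (pq.1, pq.2 + eS j))
  · rintro ⟨p, q⟩ hpq
    simp only [Finset.mem_filter, Finset.HasAntidiagonal.mem_antidiagonal] at hpq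
    rw [Finset.HasAntidiagonal.mem_antidiagonal]
    have hle : eS j ≤ q := Finsupp.single_le_iff.mpr (by omega)
    ext i
    have h1 := congrArg (fun z => z i) hpq.1
    simp only [Finsupp.add_apply] at h1 ⊢
    rw [Finsupp.tsub_apply]
    by_cases hij : i = j
    · subst hij
      simp only [Finsupp.single_eq_same] at h1 ⊢
      omega
    · rw [Finsupp.single_eq_of_ne' (Ne.symm hij)] at h1 ⊢
      omega
  · rintro ⟨p, q⟩ hpq
    rw [Finset.HasAntidiagonal.mem_antidiagonal] at hpq
    simp only [Finset.mem_filter, Finset.HasAntidiagonal.mem_antidiagonal]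
    constructor
    · rw [← hpq, add_assoc]
    · simp
  · rintro ⟨p, q⟩ hpq
    simp only [Finset.mem_filter, Finset.HasAntidiagonal.mem_antidiagonal] at hpq
    have hle : eS j ≤ q := Finsupp.single_le_iff.mpr (by omega)
    simp only [Prod.mk.injEq]
    exact ⟨trivial, tsub_add_cancel_of_le hle⟩
  · rintro ⟨p, q⟩ _
    simp only [Prod.mk.injEq]
    exact ⟨trivial, by ext i; simp [Finsupp.tsub_apply, Finsupp.add_apply]⟩
  · rintro ⟨p, q⟩ hpq
    simp only [Finset.mem_filter, Finset.HasAntidiagonal.mem_antidiagonal] at hpq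
    have hle : eS j ≤ q := Finsupp.single_le_iff.mpr (by omega)
    have hq : (q - eS j) + eS j = q := tsub_add_cancel_of_le hle
    have hqj : (q - eS j) j + 1 = q j := by
      rw [Finsupp.tsub_apply, Finsupp.single_eq_same]
      omega
    rw [hq, ← hqj]

lemma pdFun_leibniz (j : Fin n) (f g : Rn n) :
    pdFun j (f * g) = f * pdFun j g + g * pdFun j f := by
  classical
  apply MvPowerSeries.ext
  intro d
  rw [map_add, coeff_pdFun, MvPowerSeries.coeff_mul, MvPowerSeries.coeff_mul,
    MvPowerSeries.coeff_mul, Finset.mul_sum]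
  have key : ∀ pq ∈ Finset.HasAntidiagonal.antidiagonal (d + eS j),
      ((d j + 1 : ℕ) : ℂ) * (MvPowerSeries.coeff pq.1 f * MvPowerSeries.coeff pq.2 g) =
      ((pq.1 j : ℕ) : ℂ) * (MvPowerSeries.coeff pq.1 f * MvPowerSeries.coeff pq.2 g) +
      ((pq.2 j : ℕ) : ℂ) * (MvPowerSeries.coeff pq.1 f * MvPowerSeries.coeff pq.2 g) := by
    rintro ⟨p, q⟩ hpq
    rw [Finset.HasAntidiagonal.mem_antidiagonal] at hpq
    have h1 := congrArg (fun z => z j) hpq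
    simp only [eS, Finsupp.add_apply, Finsupp.single_eq_same] at h1
    have h2 : d j + 1 = p j + q j := by omega
    rw [← add_mul, h2]
    push_cast
    ring
  rw [Finset.sum_congr rfl key, Finset.sum_add_distrib, add_comm]
  congr 1
  · rw [pdFun_aux]
    apply Finset.sum_congr rfl
    rintro ⟨p, q⟩ _
    rw [coeff_pdFun]
    push_cast
    ring
  · -- the p-part
    have swap1 : ∑ pq ∈ Finset.HasAntidiagonal.antidiagonal (d + eS j),
        ((pq.1 j : ℕ) : ℂ) * (MvPowerSeries.coeff pq.1 f * MvPowerSeries.coeff pq.2 g) =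
        ∑ pq ∈ Finset.HasAntidiagonal.antidiagonal (d + eS j),
        ((pq.2 j : ℕ) : ℂ) * (MvPowerSeries.coeff pq.1 g * MvPowerSeries.coeff pq.2 f) := by
      apply Finset.sum_nbij' (i := fun pq => (pq.2, pq.1)) (j := fun pq => (pq.2, pq.1))
      · rintro ⟨p, q⟩ hpq
        rw [Finset.HasAntidiagonal.mem_antidiagonal] at hpq ⊢
        rw [add_comm]
        exact hpq
      · rintro ⟨p, q⟩ hpq
        rw [Finset.HasAntidiagonal.mem_antidiagonal] at hpq ⊢
        rw [add_comm]
        exact hpq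
      · rintro ⟨p, q⟩ _
        rfl
      · rintro ⟨p, q⟩ _
        rfl
      · rintro ⟨p, q⟩ _
        ring
    rw [swap1, pdFun_aux]
    apply Finset.sum_congr rfl
    rintro ⟨p, q⟩ _
    rw [coeff_pdFun]
    push_cast
    ring

noncomputable def pd (j : Fin n) : Derivation ℂ (Rn n) (Rn n) where
  toFun := pdFun j
  map_add' f g := by
    apply MvPowerSeries.ext
    intro d
    rw [coeff_pdFun, map_add, map_add, coeff_pdFun, coeff_pdFun]
    ring
  map_smul' c f := by
    apply MvPowerSeries.ext
    intro d
    rw [RingHom.id_apply, coeff_pdFun]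
    rw [MvPowerSeries.coeff_smul, MvPowerSeries.coeff_smul, coeff_pdFun]
    simp [smul_eq_mul]
    ring
  map_one_eq_zero' := by
    show pdFun j (1 : Rn n) = 0
    apply MvPowerSeries.ext
    intro d
    rw [coeff_pdFun, MvPowerSeries.coeff_one, if_neg, mul_zero, map_zero]
    intro h
    have := congrArg (fun z => z j) h
    simp [eS, Finsupp.add_apply, Finsupp.single_eq_same] at this
  leibniz' f g := by
    show pdFun j (f * g) = f • pdFun j g + g • pdFun j f
    rw [pdFun_leibniz]
    rfl

lemma pd_apply (j : Fin n) (f : Rn n) : pd j f = pdFun j f := rfl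

lemma pd_X (j i : Fin n) : pd j (MvPowerSeries.X i : Rn n) = if j = i then 1 else 0 := by
  classical
  apply MvPowerSeries.ext
  intro d
  rw [pd_apply, coeff_pdFun, MvPowerSeries.X_def, MvPowerSeries.coeff_monomial]
  by_cases hij : j = i
  · subst hij
    by_cases hd : d = 0
    · subst hd
      simp
    · rw [if_neg, if_pos rfl, MvPowerSeries.coeff_one, if_neg hd, mul_zero]
      intro h
      apply hd
      have : d + eS j - eS j = eS j - eS j := by rw [h]
      rwa [add_tsub_cancel_right, tsub_self] at this
  · rw [if_neg, if_neg hij, map_zero, mul_zero]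
    intro h
    have := congrArg (fun z => z j) h
    simp only [Finsupp.add_apply, Finsupp.single_eq_same,
      Finsupp.single_eq_of_ne' (Ne.symm hij)] at this
    omega

lemma pd_eq_zero_of_varsGE {c : ℕ} {j : Fin n} (hj : (j : ℕ) < c) {f : Rn n}
    (hf : f ∈ varsGE n c) : pd j f = 0 := by
  apply MvPowerSeries.ext
  intro d
  rw [pd_apply, coeff_pdFun, map_zero, hf, mul_zero]
  exact ⟨j, hj, by simp [Finsupp.add_apply, Finsupp.single_eq_same]⟩

end Pd

section G0

variable {n : ℕ}

/-- the vector field `u ∂/∂x_j`. -/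
noncomputable def vf (u : Rn n) (j : Fin n) : Derivation ℂ (Rn n) (Rn n) where
  toFun f := u * pd j f
  map_add' f g := by
    show u * pd j (f + g) = u * pd j f + u * pd j g
    rw [map_add]
    ring
  map_smul' c f := by
    show u * pd j (c • f) = c • (u * pd j f)
    rw [Derivation.map_smul, mul_smul_comm]
  map_one_eq_zero' := by
    show u * pd j 1 = 0
    rw [Derivation.map_one_eq_zero, mul_zero]
  leibniz' a b := by
    show u * pd j (a * b) = a • (u * pd j b) + b • (u * pd j a)
    rw [Derivation.leibniz, smul_eq_mul, smul_eq_mul, smul_eq_mul, smul_eq_mul]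
    ring

lemma vf_apply (u : Rn n) (j : Fin n) (f : Rn n) : vf u j f = u * pd j f := rfl

lemma vf_X (u : Rn n) (j i : Fin n) :
    vf u j (MvPowerSeries.X i) = if j = i then u else 0 := by
  rw [vf_apply, pd_X]
  split <;> simp

/-- The condition defining `G₀`. -/
def Gcond (Z : Derivation ℂ (Rn n) (Rn n)) : Prop :=
  (∀ j : Fin n, (j : ℕ) < n - 1 →
    ∃ a b : Rn n, OnlyVarsAfter n j a ∧ OnlyVarsAfter n j b ∧
      a ∈ (mIdeal n) ^ 2 ∧ b ∈ mIdeal n ∧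
      Z (MvPowerSeries.X j) = a + MvPowerSeries.X j * b) ∧
  (∀ j : Fin n, (j : ℕ) = n - 1 →
    ∃ t s : ℂ, Z (MvPowerSeries.X j) = t • (MvPowerSeries.X j) ^ 2 + s • MvPowerSeries.X j)

lemma onlyVarsAfter_iff (j : Fin n) (a : Rn n) :
    OnlyVarsAfter n j a ↔ a ∈ varsGE n ((j : ℕ) + 1) := by
  constructor
  · intro h d hd
    obtain ⟨i, hi, hdi⟩ := hd
    exact h d ⟨i, by rw [Fin.le_def]; omega, hdi⟩
  · intro h d hd
    obtain ⟨i, hi, hdi⟩ := hd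
    rw [Fin.le_def] at hi
    exact h d ⟨i, by omega, hdi⟩

lemma Gcond_values {Z : Derivation ℂ (Rn n) (Rn n)} (hZ : Gcond Z) (c : ℕ) (i : Fin n)
    (hc : c ≤ (i : ℕ)) : Z (MvPowerSeries.X i) ∈ mIdeal n ∧ Z (MvPowerSeries.X i) ∈ varsGE n c := by
  by_cases hi : (i : ℕ) < n - 1
  · obtain ⟨a, b, ha1, hb1, ha2, hb2, hzi⟩ := hZ.1 i hi
    rw [onlyVarsAfter_iff] at ha1 hb1
    rw [hzi]
    constructor
    · exact add_mem (Ideal.pow_le_self (by omega) ha2)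
        (Ideal.mul_mem_right _ _ (X_mem_mIdeal i))
    · exact Subalgebra.add_mem _ (varsGE_mono (by omega) ha1)
        (Subalgebra.mul_mem _ (X_mem_varsGE hc) (varsGE_mono (by omega) hb1))
  · have hi' : (i : ℕ) = n - 1 := by have := i.isLt; omega
    obtain ⟨t, s, hzi⟩ := hZ.2 i hi'
    rw [hzi]
    constructor
    · apply add_mem
      · apply Submodule.smul_of_tower_mem
        rw [pow_two]
        exact Ideal.mul_mem_right _ _ (X_mem_mIdeal i)
      · exact Submodule.smul_of_tower_mem _ _ (X_mem_mIdeal i)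
    · exact Subalgebra.add_mem _
        (Subalgebra.smul_mem _ (Subalgebra.pow_mem _ (X_mem_varsGE hc) 2) t)
        (Subalgebra.smul_mem _ (X_mem_varsGE hc) s)

lemma Gcond_mem_m {Z : Derivation ℂ (Rn n) (Rn n)} (hn : 1 ≤ n) (hZ : Gcond Z) (f : Rn n) :
    Z f ∈ mIdeal n :=
  derivation_mem_m hn (fun i => (Gcond_values hZ 0 i (by omega)).1) f

lemma Gcond_bracket (hn : 1 ≤ n) {Z W : Derivation ℂ (Rn n) (Rn n)}
    (hZ : Gcond Z) (hW : Gcond W) : Gcond ⁅Z, W⁆ := by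
  constructor
  · intro j hj
    obtain ⟨a, b, ha1, hb1, ha2, hb2, hzj⟩ := hZ.1 j hj
    obtain ⟨a', b', ha1', hb1', ha2', hb2', hwj⟩ := hW.1 j hj
    rw [onlyVarsAfter_iff] at ha1 hb1 ha1' hb1'
    have hZv := fun i hi => Gcond_values hZ ((j : ℕ) + 1) i hi
    have hWv := fun i hi => Gcond_values hW ((j : ℕ) + 1) i hi
    have hZm := fun i => (Gcond_values hZ 0 i (by omega)).1
    have hWm := fun i => (Gcond_values hW 0 i (by omega)).1
    refine ⟨Z a' - W a + a * b' - a' * b, Z b' - W b, ?_, ?_, ?_, ?_, ?_⟩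
    · rw [onlyVarsAfter_iff]
      refine Subalgebra.sub_mem _ (Subalgebra.add_mem _ (Subalgebra.sub_mem _ ?_ ?_)
        (Subalgebra.mul_mem _ ha1 hb1')) (Subalgebra.mul_mem _ ha1' hb1)
      · exact (derivation_mem hn hZv ha1').2
      · exact (derivation_mem hn hWv ha1).2
    · rw [onlyVarsAfter_iff]
      exact Subalgebra.sub_mem _ (derivation_mem hn hZv hb1').2 (derivation_mem hn hWv hb1).2
    · refine sub_mem (add_mem (sub_mem ?_ ?_) ?_) ?_
      · exact derivation_mem_sq hn hZm ha2'
      · exact derivation_mem_sq hn hWm ha2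
      · exact Ideal.mul_mem_right _ _ ha2
      · exact Ideal.mul_mem_right _ _ ha2'
    · exact sub_mem (derivation_mem_m hn hZm b') (derivation_mem_m hn hWm b)
    · rw [Derivation.commutator_apply, hwj, hzj, map_add, map_add, Derivation.leibniz,
        Derivation.leibniz, hzj, hwj, smul_eq_mul, smul_eq_mul, smul_eq_mul, smul_eq_mul]
      ring
  · intro j hj
    obtain ⟨t, s, hzj⟩ := hZ.2 j hj
    obtain ⟨t', s', hwj⟩ := hW.2 j hj
    refine ⟨t' * s - t * s', 0, ?_⟩
    rw [Derivation.commutator_apply, hwj, hzj, map_add, map_add, Derivation.map_smul, Derivation.map_smul, Derivation.map_smul,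
      Derivation.map_smul, sq, Derivation.leibniz, Derivation.leibniz, hzj, hwj]
    simp only [smul_eq_mul, Algebra.smul_def, map_mul, map_add, map_sub, map_zero]
    ring

/-- `G₀` as a Lie subalgebra. -/
noncomputable def G0 (n : ℕ) (hn : 1 ≤ n) : LieSubalgebra ℂ (Derivation ℂ (Rn n) (Rn n)) where
  carrier := {Z | Gcond Z}
  add_mem' := by
    rintro Z W ⟨hZ1, hZ2⟩ ⟨hW1, hW2⟩
    constructor
    · intro j hj
      obtain ⟨a, b, ha1, hb1, ha2, hb2, hzj⟩ := hZ1 j hj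
      obtain ⟨a', b', ha1', hb1', ha2', hb2', hwj⟩ := hW1 j hj
      rw [onlyVarsAfter_iff] at ha1 hb1 ha1' hb1'
      refine ⟨a + a', b + b', ?_, ?_, add_mem ha2 ha2', add_mem hb2 hb2', ?_⟩
      · rw [onlyVarsAfter_iff]; exact Subalgebra.add_mem _ ha1 ha1'
      · rw [onlyVarsAfter_iff]; exact Subalgebra.add_mem _ hb1 hb1'
      · rw [Derivation.add_apply, hzj, hwj]; ring
    · intro j hj
      obtain ⟨t, s, hzj⟩ := hZ2 j hj
      obtain ⟨t', s', hwj⟩ := hW2 j hj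
      refine ⟨t + t', s + s', ?_⟩
      rw [Derivation.add_apply, hzj, hwj]
      simp only [Algebra.smul_def, map_add]
      ring
  zero_mem' := by
    constructor
    · intro j hj
      refine ⟨0, 0, fun d _ => by simp, fun d _ => by simp, zero_mem _, zero_mem _, ?_⟩
      simp
    · intro j hj
      exact ⟨0, 0, by simp⟩
  smul_mem' := by
    rintro c Z ⟨hZ1, hZ2⟩
    constructor
    · intro j hj
      obtain ⟨a, b, ha1, hb1, ha2, hb2, hzj⟩ := hZ1 j hj
      rw [onlyVarsAfter_iff] at ha1 hb1
      refine ⟨c • a, c • b, ?_, ?_, Submodule.smul_of_tower_mem _ _ ha2, Submodule.smul_of_tower_mem _ _ hb2, ?_⟩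
      · rw [onlyVarsAfter_iff]; exact Subalgebra.smul_mem _ ha1 c
      · rw [onlyVarsAfter_iff]; exact Subalgebra.smul_mem _ hb1 c
      · rw [Derivation.smul_apply, hzj, smul_add, mul_smul_comm]
    · intro j hj
      obtain ⟨t, s, hzj⟩ := hZ2 j hj
      refine ⟨c * t, c * s, ?_⟩
      rw [Derivation.smul_apply, hzj, smul_add, smul_smul, smul_smul]
  lie_mem' := fun {Z W} hZ hW => Gcond_bracket hn hZ hW

lemma mem_G0_iff (hn : 1 ≤ n) (Z : Derivation ℂ (Rn n) (Rn n)) :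
    Z ∈ G0 n hn ↔ Gcond Z := Iff.rfl

end G0

section Upper

variable {n : ℕ}

/-- `Z` kills all variables with index `≥ c`. -/
def Econd (c : ℕ) (Z : Derivation ℂ (Rn n) (Rn n)) : Prop :=
  ∀ i : Fin n, c ≤ (i : ℕ) → Z (MvPowerSeries.X i) = 0

/-- submodule used in the intermediate step of the derived series bound. -/
noncomputable def Msub (j : Fin n) : Submodule ℂ (Rn n) :=
  if (j : ℕ) + 1 = n then ℂ ∙ ((MvPowerSeries.X j : Rn n) ^ 2)
  else (((mIdeal n) ^ 2).restrictScalars ℂ) ⊓ (varsGE n ((j : ℕ) + 1)).toSubmodule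

def Fcond (j : Fin n) (Z : Derivation ℂ (Rn n) (Rn n)) : Prop :=
  Econd ((j : ℕ) + 1) Z ∧ Z (MvPowerSeries.X j) ∈ Msub j

lemma half1 (hn : 1 ≤ n) {Z W : Derivation ℂ (Rn n) (Rn n)} (hZG : Gcond Z) (hWG : Gcond W)
    (j : Fin n) (hZ : Econd ((j : ℕ) + 1) Z) (hW : Econd ((j : ℕ) + 1) W) :
    Fcond j ⁅Z, W⁆ := by
  constructor
  · intro i hi
    rw [Derivation.commutator_apply, hZ i hi, hW i hi, map_zero, map_zero, sub_zero]
  · by_cases hc : (j : ℕ) + 1 = n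
    · obtain ⟨t, s, hzj⟩ := hZG.2 j (by omega)
      obtain ⟨t', s', hwj⟩ := hWG.2 j (by omega)
      have key : ⁅Z, W⁆ (MvPowerSeries.X j) = (t' * s - t * s') • (MvPowerSeries.X j) ^ 2 := by
        rw [Derivation.commutator_apply, hwj, hzj, map_add, map_add, Derivation.map_smul,
          Derivation.map_smul, Derivation.map_smul, Derivation.map_smul, sq, Derivation.leibniz,
          Derivation.leibniz, hzj, hwj]
        simp only [smul_eq_mul, Algebra.smul_def, map_mul, map_add, map_sub, map_zero]
        ring
      rw [key, Msub, if_pos hc]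
      exact Submodule.smul_mem _ _ (Submodule.mem_span_singleton_self _)
    · obtain ⟨a, b, ha1, hb1, ha2, hb2, hzj⟩ := hZG.1 j (by have := j.isLt; omega)
      obtain ⟨a', b', ha1', hb1', ha2', hb2', hwj⟩ := hWG.1 j (by have := j.isLt; omega)
      rw [onlyVarsAfter_iff] at ha1 hb1 ha1' hb1'
      have hza' : Z a' = 0 := derivation_zero_on hn hZ ha1'
      have hzb' : Z b' = 0 := derivation_zero_on hn hZ hb1'
      have hwa : W a = 0 := derivation_zero_on hn hW ha1
      have hwb : W b = 0 := derivation_zero_on hn hW hb1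
      have key : ⁅Z, W⁆ (MvPowerSeries.X j) = a * b' - a' * b := by
        rw [Derivation.commutator_apply, hwj, hzj, map_add, map_add, Derivation.leibniz,
          Derivation.leibniz, hzj, hwj, hza', hzb', hwa, hwb]
        simp only [smul_eq_mul, mul_zero, zero_add, add_zero]
        ring
      rw [key, Msub, if_neg hc]
      constructor
      · exact sub_mem (Ideal.mul_mem_right _ _ ha2) (Ideal.mul_mem_right _ _ ha2')
      · exact Subalgebra.sub_mem _ (Subalgebra.mul_mem _ ha1 hb1')
          (Subalgebra.mul_mem _ ha1' hb1)

lemma half2 (hn : 1 ≤ n) (j : Fin n) {Z W : Derivation ℂ (Rn n) (Rn n)}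
    (hFZ : Fcond j Z) (hFW : Fcond j W) : Econd (j : ℕ) ⁅Z, W⁆ := by
  intro i hi
  by_cases hij : (j : ℕ) + 1 ≤ (i : ℕ)
  · rw [Derivation.commutator_apply, hFZ.1 i hij, hFW.1 i hij, map_zero, map_zero, sub_zero]
  · have hijeq : i = j := by
      apply Fin.ext
      omega
    subst hijeq
    rw [Derivation.commutator_apply]
    by_cases hc : (i : ℕ) + 1 = n
    · have hz := hFZ.2
      have hw := hFW.2
      rw [Msub, if_pos hc, Submodule.mem_span_singleton] at hz hw
      obtain ⟨t, ht⟩ := hz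
      obtain ⟨t', ht'⟩ := hw
      rw [← ht, ← ht', Derivation.map_smul, Derivation.map_smul, sq, Derivation.leibniz,
        Derivation.leibniz, ← ht, ← ht']
      simp only [smul_eq_mul, Algebra.smul_def, map_mul]
      ring
    · have hz := hFZ.2
      have hw := hFW.2
      rw [Msub, if_neg hc] at hz hw
      rw [derivation_zero_on hn hFZ.1 hw.2, derivation_zero_on hn hFW.1 hz.2, sub_zero]

lemma DS_le_of_le (hn : 1 ≤ n) {k m : ℕ} (h : m ≤ k) :
    LieAlgebra.derivedSeries ℂ (G0 n hn) k ≤ LieAlgebra.derivedSeries ℂ (G0 n hn) m := by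
  induction k with
  | zero =>
    have : m = 0 := by omega
    subst this
    exact le_rfl
  | succ k ih =>
    rcases Nat.lt_or_ge m (k + 1) with h' | h'
    · exact le_trans (LieAlgebra.derivedSeriesOfIdeal_succ_le _ _) (ih (by omega))
    · have : m = k + 1 := by omega
      subst this
      exact le_rfl

lemma upper_master (hn : 1 ≤ n) : ∀ k, k ≤ n →
    ∀ z ∈ LieAlgebra.derivedSeries ℂ (G0 n hn) (2 * k),
      Econd (n - k) (z : Derivation ℂ (Rn n) (Rn n)) := by
  intro k
  induction k with
  | zero =>
    intro _ z _ i hi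
    have := i.isLt
    omega
  | succ k ih =>
    intro hk z hz
    set j : Fin n := ⟨n - k - 1, by omega⟩ with hj
    have hjval : (j : ℕ) + 1 = n - k := by
      show n - k - 1 + 1 = n - k
      omega
    -- step 1 : elements of the (2k+1)-st term satisfy `Fcond j`
    have step1 : ∀ w ∈ LieAlgebra.derivedSeries ℂ (G0 n hn) (2 * k + 1),
        Fcond j (w : Derivation ℂ (Rn n) (Rn n)) := by
      intro w hw
      have h1 : LieAlgebra.derivedSeries ℂ (G0 n hn) (2 * k + 1) =
          ⁅LieAlgebra.derivedSeries ℂ (G0 n hn) (2 * k),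
            LieAlgebra.derivedSeries ℂ (G0 n hn) (2 * k)⁆ :=
        LieAlgebra.derivedSeriesOfIdeal_succ (R := ℂ) (L := ↥(G0 n hn)) ⊤ (2 * k)
      rw [h1] at hw
      rw [← LieSubmodule.mem_toSubmodule, LieSubmodule.lieIdeal_oper_eq_linear_span'] at hw
      refine Submodule.span_induction ?_ ?_ ?_ ?_ hw
      · rintro _ ⟨x, hx, y, hy, rfl⟩
        have hEx : Econd ((j : ℕ) + 1) (x : Derivation ℂ (Rn n) (Rn n)) := by
          rw [hjval]; exact ih (by omega) x hx
        have hEy : Econd ((j : ℕ) + 1) (y : Derivation ℂ (Rn n) (Rn n)) := by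
          rw [hjval]; exact ih (by omega) y hy
        have := half1 hn x.2 y.2 j hEx hEy
        rwa [← LieSubalgebra.coe_bracket] at this
      · exact ⟨fun i _ => by simp, by simp⟩
      · rintro x y _ _ ⟨hx1, hx2⟩ ⟨hy1, hy2⟩
        have hcoe : ((x + y : ↥(G0 n hn)) : Derivation ℂ (Rn n) (Rn n)) = ↑x + ↑y := rfl
        constructor
        · intro i hi
          rw [hcoe, Derivation.add_apply, hx1 i hi, hy1 i hi, add_zero]
        · rw [hcoe, Derivation.add_apply]
          exact add_mem hx2 hy2
      · rintro c x _ ⟨hx1, hx2⟩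
        have hcoe : ((c • x : ↥(G0 n hn)) : Derivation ℂ (Rn n) (Rn n)) = c • ↑x := rfl
        constructor
        · intro i hi
          rw [hcoe, Derivation.smul_apply, hx1 i hi, smul_zero]
        · rw [hcoe, Derivation.smul_apply]
          exact Submodule.smul_mem _ _ hx2
    -- step 2 : elements of the (2k+2)-nd term satisfy `Econd (n - (k+1))`
    have h2 : LieAlgebra.derivedSeries ℂ (G0 n hn) (2 * (k + 1)) =
        ⁅LieAlgebra.derivedSeries ℂ (G0 n hn) (2 * k + 1),
          LieAlgebra.derivedSeries ℂ (G0 n hn) (2 * k + 1)⁆ := by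
      have : 2 * (k + 1) = (2 * k + 1) + 1 := by ring
      rw [this]
      exact LieAlgebra.derivedSeriesOfIdeal_succ (R := ℂ) (L := ↥(G0 n hn)) ⊤ (2 * k + 1)
    rw [h2] at hz
    rw [← LieSubmodule.mem_toSubmodule, LieSubmodule.lieIdeal_oper_eq_linear_span'] at hz
    have hgoal : Econd ((j : ℕ)) (z : Derivation ℂ (Rn n) (Rn n)) → Econd (n - (k + 1)) (z : Derivation ℂ (Rn n) (Rn n)) := by
      intro h i hi
      apply h i
      show n - k - 1 ≤ (i : ℕ)
      omega
    apply hgoal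
    clear hgoal
    refine Submodule.span_induction ?_ ?_ ?_ ?_ hz
    · rintro _ ⟨x, hx, y, hy, rfl⟩
      have := half2 hn j (step1 x hx) (step1 y hy)
      rwa [← LieSubalgebra.coe_bracket] at this
    · intro i _
      simp
    · rintro x y _ _ hx1 hy1
      have hcoe : ((x + y : ↥(G0 n hn)) : Derivation ℂ (Rn n) (Rn n)) = ↑x + ↑y := rfl
      intro i hi
      rw [hcoe, Derivation.add_apply, hx1 i hi, hy1 i hi, add_zero]
    · rintro c x _ hx1
      have hcoe : ((c • x : ↥(G0 n hn)) : Derivation ℂ (Rn n) (Rn n)) = c • ↑x := rfl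
      intro i hi
      rw [hcoe, Derivation.smul_apply, hx1 i hi, smul_zero]

lemma upper_bound (hn : 1 ≤ n) :
    LieAlgebra.derivedSeries ℂ (G0 n hn) (2 * n) = ⊥ := by
  rw [eq_bot_iff]
  intro z hz
  have hE := upper_master hn n le_rfl z hz
  have hzero : (z : Derivation ℂ (Rn n) (Rn n)) = 0 := by
    apply derivation_ext hn
    intro i
    rw [hE i (by omega)]
    simp
  rw [LieSubmodule.mem_bot]
  exact Subtype.coe_injective hzero

end Upper

section Lower

variable {n : ℕ}

def IsMono (f : Rn n) : Prop := ∃ (d : Fin n →₀ ℕ) (c : ℂ), c ≠ 0 ∧ f = monomial d c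

lemma IsMono.ne_zero {f : Rn n} (hf : IsMono f) : f ≠ 0 := by
  obtain ⟨d, c, hc, rfl⟩ := hf
  intro h
  have := congrArg (MvPowerSeries.coeff d) h
  rw [coeff_monomial_same, map_zero] at this
  exact hc this

lemma IsMono.mul {f g : Rn n} (hf : IsMono f) (hg : IsMono g) : IsMono (f * g) := by
  obtain ⟨d, c, hc, rfl⟩ := hf
  obtain ⟨d', c', hc', rfl⟩ := hg
  exact ⟨d + d', c * c', mul_ne_zero hc hc', by rw [monomial_mul_monomial]⟩

lemma IsMono.one : IsMono (1 : Rn n) := by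
  refine ⟨0, 1, one_ne_zero, ?_⟩
  apply MvPowerSeries.ext
  intro d
  rw [MvPowerSeries.coeff_one, MvPowerSeries.coeff_monomial]

lemma IsMono.X (i : Fin n) : IsMono (MvPowerSeries.X i : Rn n) :=
  ⟨single i 1, 1, one_ne_zero, MvPowerSeries.X_def i⟩

lemma IsMono.add_self {f : Rn n} (hf : IsMono f) : IsMono (f + f) := by
  obtain ⟨d, c, hc, rfl⟩ := hf
  refine ⟨d, c + c, ?_, by rw [← map_add]⟩
  intro h
  apply hc
  have h2 : (2 : ℂ) * c = 0 := by rw [two_mul]; exact h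
  rcases mul_eq_zero.mp h2 with h' | h'
  · norm_num at h'
  · exact h'

lemma IsMono.neg {f : Rn n} (hf : IsMono f) : IsMono (-f) := by
  obtain ⟨d, c, hc, rfl⟩ := hf
  exact ⟨d, -c, neg_ne_zero.mpr hc, by rw [← map_neg]⟩

lemma vf_zero (j : Fin n) : vf 0 j = 0 := by
  apply Derivation.ext
  intro f
  show (0 : Rn n) * pd j f = 0
  rw [zero_mul]

lemma vf_neg (u : Rn n) (j : Fin n) : vf (-u) j = -(vf u j) := by
  apply Derivation.ext
  intro f
  show (-u) * pd j f = -(u * pd j f)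
  ring

lemma vf_sub (u v : Rn n) (j : Fin n) : vf (u - v) j = vf u j - vf v j := by
  apply Derivation.ext
  intro f
  show (u - v) * pd j f = u * pd j f - v * pd j f
  ring

lemma pd_X_mul_same (j : Fin n) (u : Rn n) :
    pd j (MvPowerSeries.X j * u) = u + MvPowerSeries.X j * pd j u := by
  rw [Derivation.leibniz, pd_X, if_pos rfl, smul_eq_mul, smul_eq_mul, mul_one]
  ring

lemma pd_X_mul_ne {j i : Fin n} (h : j ≠ i) (u : Rn n) :
    pd j (MvPowerSeries.X i * u) = MvPowerSeries.X i * pd j u := by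
  rw [Derivation.leibniz, pd_X, if_neg h, smul_eq_mul, smul_eq_mul, mul_zero, add_zero]

lemma vf_bracket (u v : Rn n) (i i' : Fin n) :
    ⁅vf u i, vf v i'⁆ = vf (u * pd i v) i' - vf (v * pd i' u) i := by
  apply derivation_ext (Nat.one_le_iff_ne_zero.mpr (Nat.pos_iff_ne_zero.mp i.pos))
  intro l
  rw [Derivation.commutator_apply, Derivation.sub_apply, vf_X, vf_X, vf_X, vf_X]
  by_cases h1 : i' = l <;> by_cases h2 : i = l <;>
    simp [h1, h2, vf_apply, mul_comm]

lemma brak2 {j j' : Fin n} (hlt : (j' : ℕ) < (j : ℕ)) (w v : Rn n)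
    (hw : w ∈ varsGE n (j : ℕ)) :
    ⁅vf w j, vf v j'⁆ = vf (w * pd j v) j' := by
  rw [vf_bracket, pd_eq_zero_of_varsGE hlt hw, mul_zero, vf_zero, sub_zero]

lemma brak3 {j' : Fin n} (u p : Rn n) (hu : u ∈ varsGE n ((j' : ℕ) + 1)) (hp : pd j' p = 0) :
    ⁅vf (MvPowerSeries.X j' * u) j', vf p j'⁆ = vf (-(p * u)) j' := by
  rw [vf_bracket, hp, mul_zero, vf_zero, zero_sub, pd_X_mul_same,
    pd_eq_zero_of_varsGE (by omega) hu, mul_zero, add_zero, vf_neg]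

lemma Gcond_vf_V {j : Fin n} (hjn : (j : ℕ) < n - 1) {b : Rn n}
    (hb1 : b ∈ varsGE n ((j : ℕ) + 1)) (hb2 : b ∈ mIdeal n) :
    Gcond (vf (MvPowerSeries.X j * b) j) := by
  constructor
  · intro j' hj'
    by_cases h : j = j'
    · subst h
      refine ⟨0, b, fun d _ => by simp, (onlyVarsAfter_iff _ _).mpr hb1, zero_mem _, hb2, ?_⟩
      rw [vf_X, if_pos rfl, zero_add]
    · refine ⟨0, 0, fun d _ => by simp, fun d _ => by simp, zero_mem _, zero_mem _, ?_⟩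
      rw [vf_X, if_neg h]
      simp
  · intro j' hj'
    have h : j ≠ j' := by
      intro h
      subst h
      omega
    refine ⟨0, 0, ?_⟩
    rw [vf_X, if_neg h]
    simp

lemma Gcond_vf_U {j : Fin n} (hjn : (j : ℕ) < n - 1) {a : Rn n}
    (ha1 : a ∈ varsGE n ((j : ℕ) + 1)) (ha2 : a ∈ (mIdeal n) ^ 2) :
    Gcond (vf a j) := by
  constructor
  · intro j' hj'
    by_cases h : j = j'
    · subst h
      refine ⟨a, 0, (onlyVarsAfter_iff _ _).mpr ha1, fun d _ => by simp, ha2, zero_mem _, ?_⟩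
      rw [vf_X, if_pos rfl]
      simp
    · refine ⟨0, 0, fun d _ => by simp, fun d _ => by simp, zero_mem _, zero_mem _, ?_⟩
      rw [vf_X, if_neg h]
      simp
  · intro j' hj'
    have h : j ≠ j' := by
      intro h
      subst h
      omega
    refine ⟨0, 0, ?_⟩
    rw [vf_X, if_neg h]
    simp

lemma Gcond_vf_lastX {j : Fin n} (hj : (j : ℕ) = n - 1) :
    Gcond (vf (MvPowerSeries.X j * 1) j) := by
  constructor
  · intro j' hj'
    have h : j ≠ j' := by
      intro h
      subst h
      omega
    refine ⟨0, 0, fun d _ => by simp, fun d _ => by simp, zero_mem _, zero_mem _, ?_⟩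
    rw [vf_X, if_neg h]
    simp
  · intro j' hj'
    have h : j = j' := by
      apply Fin.ext
      omega
    subst h
    refine ⟨0, 1, ?_⟩
    rw [vf_X, if_pos rfl]
    simp

lemma Gcond_vf_lastSq {j : Fin n} (hj : (j : ℕ) = n - 1) :
    Gcond (vf (MvPowerSeries.X j * (MvPowerSeries.X j * 1)) j) := by
  constructor
  · intro j' hj'
    have h : j ≠ j' := by
      intro h
      subst h
      omega
    refine ⟨0, 0, fun d _ => by simp, fun d _ => by simp, zero_mem _, zero_mem _, ?_⟩
    rw [vf_X, if_neg h]
    simp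
  · intro j' hj'
    have h : j = j' := by
      apply Fin.ext
      omega
    subst h
    refine ⟨1, 0, ?_⟩
    rw [vf_X, if_pos rfl]
    rw [one_smul, zero_smul, add_zero, sq, mul_one]

lemma brack_mem (hn : 1 ≤ n) {k : ℕ} {Z W C : Derivation ℂ (Rn n) (Rn n)}
    {hZ : Gcond Z} {hW : Gcond W} (hC : Gcond C)
    (hZD : (⟨Z, hZ⟩ : G0 n hn) ∈ LieAlgebra.derivedSeries ℂ (G0 n hn) k)
    (hWD : (⟨W, hW⟩ : G0 n hn) ∈ LieAlgebra.derivedSeries ℂ (G0 n hn) k)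
    (h : ⁅Z, W⁆ = C) :
    (⟨C, hC⟩ : G0 n hn) ∈ LieAlgebra.derivedSeries ℂ (G0 n hn) (k + 1) := by
  have hmem := LieSubmodule.lie_mem_lie hZD hWD
  have hsucc : LieAlgebra.derivedSeries ℂ (G0 n hn) (k + 1) =
      ⁅LieAlgebra.derivedSeries ℂ (G0 n hn) k, LieAlgebra.derivedSeries ℂ (G0 n hn) k⁆ :=
    LieAlgebra.derivedSeriesOfIdeal_succ (R := ℂ) (L := ↥(G0 n hn)) ⊤ k
  rw [hsucc]
  have heq : (⟨C, hC⟩ : G0 n hn) = ⁅(⟨Z, hZ⟩ : G0 n hn), (⟨W, hW⟩ : G0 n hn)⁆ := by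
    apply Subtype.ext
    rw [LieSubalgebra.coe_bracket]
    exact h.symm
  rw [heq]
  exact hmem

end Lower

section Chain

variable {n : ℕ}

lemma chainTR (hn : 1 ≤ n) (r : ℕ) {j j' : Fin n} (hjj' : (j' : ℕ) + 1 = (j : ℕ))
    (hj'n : (j' : ℕ) < n - 1)
    {f : Rn n} (hfm : IsMono f) (hf : f ∈ varsGE n ((j : ℕ) + 1))
    (hA : Gcond (vf (MvPowerSeries.X j * f) j))
    (hAD : (⟨vf (MvPowerSeries.X j * f) j, hA⟩ : G0 n hn) ∈
      LieAlgebra.derivedSeries ℂ (G0 n hn) (2 * r)) :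
    ∀ m, m ≤ 2 * r + 1 →
      (∃ u, IsMono u ∧ u ∈ varsGE n ((j : ℕ) + 1) ∧
        ∃ hT : Gcond (vf (MvPowerSeries.X j' * (MvPowerSeries.X j * u)) j'),
          (⟨vf (MvPowerSeries.X j' * (MvPowerSeries.X j * u)) j', hT⟩ : G0 n hn) ∈
            LieAlgebra.derivedSeries ℂ (G0 n hn) m) ∧
      (∃ q, IsMono q ∧ q ∈ varsGE n ((j : ℕ) + 1) ∧
        ∃ hR : Gcond (vf (MvPowerSeries.X j * (MvPowerSeries.X j * q)) j'),
          (⟨vf (MvPowerSeries.X j * (MvPowerSeries.X j * q)) j', hR⟩ : G0 n hn) ∈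
            LieAlgebra.derivedSeries ℂ (G0 n hn) m) := by
  have hjn1 : varsGE n ((j' : ℕ) + 1) = varsGE n (j : ℕ) := by rw [hjj']
  have hlt : (j' : ℕ) < (j : ℕ) := by omega
  have hXj : (MvPowerSeries.X j : Rn n) ∈ varsGE n (j : ℕ) := X_mem_varsGE le_rfl
  have hfj : f ∈ varsGE n (j : ℕ) := varsGE_mono (by omega) hf
  have hw : MvPowerSeries.X j * f ∈ varsGE n (j : ℕ) := Subalgebra.mul_mem _ hXj hfj
  have hne : j ≠ j' := by
    intro h
    rw [h] at hlt
    omega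
  intro m
  induction m with
  | zero =>
    intro _
    constructor
    · refine ⟨1, IsMono.one, Subalgebra.one_mem _, ?_, ?_⟩
      · apply Gcond_vf_V hj'n
        · rw [hjn1]
          exact Subalgebra.mul_mem _ hXj (Subalgebra.one_mem _)
        · exact Ideal.mul_mem_right _ _ (X_mem_mIdeal j)
      · exact LieSubmodule.mem_top _
    · refine ⟨1, IsMono.one, Subalgebra.one_mem _, ?_, ?_⟩
      · apply Gcond_vf_U hj'n
        · rw [hjn1]
          exact Subalgebra.mul_mem _ hXj (Subalgebra.mul_mem _ hXj (Subalgebra.one_mem _))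
        · rw [pow_two]
          exact Ideal.mul_mem_mul (X_mem_mIdeal j) (Ideal.mul_mem_right _ _ (X_mem_mIdeal j))
      · exact LieSubmodule.mem_top _
  | succ m ih =>
    intro hm
    obtain ⟨⟨u, hum, hu, hT, hTD⟩, ⟨q, hqm, hq, hR, hRD⟩⟩ := ih (by omega)
    have hAD' : (⟨vf (MvPowerSeries.X j * f) j, hA⟩ : G0 n hn) ∈
        LieAlgebra.derivedSeries ℂ (G0 n hn) m :=
      DS_le_of_le hn (by omega) hAD
    constructor
    · -- new T element with u' = f * u
      have hpd : pd j (MvPowerSeries.X j' * (MvPowerSeries.X j * u)) =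
          MvPowerSeries.X j' * (MvPowerSeries.X j * pd j u + u) := by
        rw [pd_X_mul_ne hne, pd_X_mul_same]
        ring
      have hpdu : pd j u = 0 := pd_eq_zero_of_varsGE (by omega) hu
      have hbr : ⁅vf (MvPowerSeries.X j * f) j,
          vf (MvPowerSeries.X j' * (MvPowerSeries.X j * u)) j'⁆ =
          vf (MvPowerSeries.X j' * (MvPowerSeries.X j * (f * u))) j' := by
        rw [brak2 hlt _ _ hw, hpd, hpdu]
        exact congrArg (fun z => vf z j') (by ring)
      have hGC : Gcond (vf (MvPowerSeries.X j' * (MvPowerSeries.X j * (f * u))) j') := by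
        apply Gcond_vf_V hj'n
        · rw [hjn1]
          exact Subalgebra.mul_mem _ hXj (Subalgebra.mul_mem _ hfj (varsGE_mono (by omega) hu))
        · exact Ideal.mul_mem_right _ _ (X_mem_mIdeal j)
      refine ⟨f * u, hfm.mul hum, Subalgebra.mul_mem _ hf hu, hGC, ?_⟩
      exact brack_mem hn hGC hAD' hTD hbr
    · -- new R element with q' = f * q + f * q
      have hpd : pd j (MvPowerSeries.X j * (MvPowerSeries.X j * q)) =
          (MvPowerSeries.X j * q) + MvPowerSeries.X j * (q + MvPowerSeries.X j * pd j q) := by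
        rw [pd_X_mul_same, pd_X_mul_same]
      have hpdq : pd j q = 0 := pd_eq_zero_of_varsGE (by omega) hq
      have hbr : ⁅vf (MvPowerSeries.X j * f) j,
          vf (MvPowerSeries.X j * (MvPowerSeries.X j * q)) j'⁆ =
          vf (MvPowerSeries.X j * (MvPowerSeries.X j * (f * q + f * q))) j' := by
        rw [brak2 hlt _ _ hw, hpd, hpdq]
        exact congrArg (fun z => vf z j') (by ring)
      have hGC : Gcond (vf (MvPowerSeries.X j * (MvPowerSeries.X j * (f * q + f * q))) j') := by
        apply Gcond_vf_U hj'n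
        · rw [hjn1]
          refine Subalgebra.mul_mem _ hXj (Subalgebra.mul_mem _ hXj (Subalgebra.add_mem _ ?_ ?_)) <;>
            exact Subalgebra.mul_mem _ hfj (varsGE_mono (by omega) hq)
        · rw [pow_two]
          exact Ideal.mul_mem_mul (X_mem_mIdeal j) (Ideal.mul_mem_right _ _ (X_mem_mIdeal j))
      refine ⟨f * q + f * q, (hfm.mul hqm).add_self,
        Subalgebra.add_mem _ (Subalgebra.mul_mem _ hf hq) (Subalgebra.mul_mem _ hf hq), hGC, ?_⟩
      exact brack_mem hn hGC hAD' hRD hbr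

lemma lower_master (hn : 1 ≤ n) : ∀ r, r ≤ n - 1 →
    ∃ (j : Fin n) (f g : Rn n), (j : ℕ) = n - 1 - r ∧ IsMono f ∧ IsMono g ∧
      f ∈ varsGE n ((j : ℕ) + 1) ∧ g ∈ varsGE n (j : ℕ) ∧ g ∈ (mIdeal n) ^ 2 ∧
      ∃ (hA : Gcond (vf (MvPowerSeries.X j * f) j)) (hB : Gcond (vf g j)),
        (⟨vf (MvPowerSeries.X j * f) j, hA⟩ : G0 n hn) ∈
          LieAlgebra.derivedSeries ℂ (G0 n hn) (2 * r) ∧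
        (⟨vf g j, hB⟩ : G0 n hn) ∈ LieAlgebra.derivedSeries ℂ (G0 n hn) (2 * r + 1) := by
  intro r
  induction r with
  | zero =>
    intro _
    set j : Fin n := ⟨n - 1, by omega⟩ with hjdef
    have hj : (j : ℕ) = n - 1 := rfl
    have hXj : (MvPowerSeries.X j : Rn n) ∈ varsGE n (j : ℕ) := X_mem_varsGE le_rfl
    have hA : Gcond (vf (MvPowerSeries.X j * 1) j) := Gcond_vf_lastX hj
    have hB : Gcond (vf (MvPowerSeries.X j * (MvPowerSeries.X j * 1)) j) := Gcond_vf_lastSq hj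
    refine ⟨j, 1, MvPowerSeries.X j * (MvPowerSeries.X j * 1), by omega, IsMono.one,
      (IsMono.X j).mul ((IsMono.X j).mul IsMono.one), Subalgebra.one_mem _,
      Subalgebra.mul_mem _ hXj (Subalgebra.mul_mem _ hXj (Subalgebra.one_mem _)), ?_, hA, hB,
      LieSubmodule.mem_top _, ?_⟩
    · rw [pow_two]
      exact Ideal.mul_mem_mul (X_mem_mIdeal j) (Ideal.mul_mem_right _ _ (X_mem_mIdeal j))
    · have h1 : pd j (1 : Rn n) = 0 := Derivation.map_one_eq_zero _
      have e1 : pd j (MvPowerSeries.X j * (1 : Rn n)) = 1 := by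
        rw [pd_X_mul_same, h1, mul_zero, add_zero]
      have e2 : pd j (MvPowerSeries.X j * (MvPowerSeries.X j * (1 : Rn n))) =
          MvPowerSeries.X j * 1 + MvPowerSeries.X j * 1 := by
        rw [pd_X_mul_same, e1]
      have hbr : ⁅vf (MvPowerSeries.X j * 1) j,
          vf (MvPowerSeries.X j * (MvPowerSeries.X j * 1)) j⁆ =
          vf (MvPowerSeries.X j * (MvPowerSeries.X j * 1)) j := by
        rw [vf_bracket, e2, e1, ← vf_sub]
        exact congrArg (fun z => vf z j) (by ring)
      exact brack_mem hn (hZ := hA) (hW := hB) hB (LieSubmodule.mem_top _)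
        (LieSubmodule.mem_top _) hbr
  | succ r ihr =>
    intro hr
    obtain ⟨j, f, g, hjval, hfm, hgm, hf, hg, hg2, hA, hB, hAD, hBD⟩ := ihr (by omega)
    have hjpos : 1 ≤ (j : ℕ) := by omega
    set j' : Fin n := ⟨(j : ℕ) - 1, by omega⟩ with hj'def
    have hjj' : (j' : ℕ) + 1 = (j : ℕ) := by
      show (j : ℕ) - 1 + 1 = (j : ℕ)
      omega
    have hj'n : (j' : ℕ) < n - 1 := by
      show (j : ℕ) - 1 < n - 1
      omega
    have hjn1 : varsGE n ((j' : ℕ) + 1) = varsGE n (j : ℕ) := by rw [hjj']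
    have hlt : (j' : ℕ) < (j : ℕ) := by omega
    have hXj : (MvPowerSeries.X j : Rn n) ∈ varsGE n (j : ℕ) := X_mem_varsGE le_rfl
    have hne : j ≠ j' := by
      intro h
      rw [h] at hlt
      omega
    obtain ⟨⟨u, hum, hu, hT, hTD⟩, ⟨q, hqm, hq, hR, hRD⟩⟩ :=
      chainTR hn r hjj' hj'n hfm hf hA hAD (2 * r + 1) le_rfl
    have hgmem : g ∈ mIdeal n := Ideal.pow_le_self (by omega) hg2
    have huj : u ∈ varsGE n (j : ℕ) := varsGE_mono (by omega) hu
    have hqj : q ∈ varsGE n (j : ℕ) := varsGE_mono (by omega) hq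
    -- the new `A` element
    have hpdT : pd j (MvPowerSeries.X j' * (MvPowerSeries.X j * u)) =
        MvPowerSeries.X j' * (u + MvPowerSeries.X j * pd j u) := by
      rw [pd_X_mul_ne hne, pd_X_mul_same]
    have hpdu : pd j u = 0 := pd_eq_zero_of_varsGE (by omega) hu
    have hbrA : ⁅vf g j, vf (MvPowerSeries.X j' * (MvPowerSeries.X j * u)) j'⁆ =
        vf (MvPowerSeries.X j' * (g * u)) j' := by
      rw [brak2 hlt _ _ hg, hpdT, hpdu]
      exact congrArg (fun z => vf z j') (by ring)
    have hgu : g * u ∈ varsGE n (j : ℕ) := Subalgebra.mul_mem _ hg huj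
    have hGA : Gcond (vf (MvPowerSeries.X j' * (g * u)) j') := by
      apply Gcond_vf_V hj'n
      · rw [hjn1]
        exact hgu
      · exact Ideal.mul_mem_right _ _ hgmem
    have hAD' : (⟨vf (MvPowerSeries.X j' * (g * u)) j', hGA⟩ : G0 n hn) ∈
        LieAlgebra.derivedSeries ℂ (G0 n hn) (2 * r + 1 + 1) :=
      brack_mem hn hGA hBD hTD hbrA
    -- the new `R` element
    have hpdR : pd j (MvPowerSeries.X j * (MvPowerSeries.X j * q)) =
        (MvPowerSeries.X j * q) + MvPowerSeries.X j * (q + MvPowerSeries.X j * pd j q) := by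
      rw [pd_X_mul_same, pd_X_mul_same]
    have hpdq : pd j q = 0 := pd_eq_zero_of_varsGE (by omega) hq
    have hbrR : ⁅vf g j, vf (MvPowerSeries.X j * (MvPowerSeries.X j * q)) j'⁆ =
        vf (MvPowerSeries.X j * (g * q) + MvPowerSeries.X j * (g * q)) j' := by
      rw [brak2 hlt _ _ hg, hpdR, hpdq]
      exact congrArg (fun z => vf z j') (by ring)
    set p' : Rn n := MvPowerSeries.X j * (g * q) + MvPowerSeries.X j * (g * q) with hp'def
    have hp'm : IsMono p' := ((IsMono.X j).mul (hgm.mul hqm)).add_self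
    have hp'v : p' ∈ varsGE n (j : ℕ) := by
      apply Subalgebra.add_mem <;>
        exact Subalgebra.mul_mem _ hXj (Subalgebra.mul_mem _ hg hqj)
    have hp'2 : p' ∈ (mIdeal n) ^ 2 := by
      apply add_mem <;>
        exact Ideal.mul_mem_left _ _ (Ideal.mul_mem_right _ _ hg2)
    have hGR : Gcond (vf p' j') := by
      apply Gcond_vf_U hj'n
      · rw [hjn1]
        exact hp'v
      · exact hp'2
    have hRD' : (⟨vf p' j', hGR⟩ : G0 n hn) ∈
        LieAlgebra.derivedSeries ℂ (G0 n hn) (2 * r + 1 + 1) :=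
      brack_mem hn hGR hBD hRD hbrR
    -- the final bracket
    have hpd0 : pd j' p' = 0 := pd_eq_zero_of_varsGE hlt hp'v
    have hbrB : ⁅vf (MvPowerSeries.X j' * (g * u)) j', vf p' j'⁆ = vf (-(p' * (g * u))) j' := by
      apply brak3
      · rw [hjn1]
        exact hgu
      · exact hpd0
    have hGB : Gcond (vf (-(p' * (g * u))) j') := by
      apply Gcond_vf_U hj'n
      · rw [hjn1]
        exact Subalgebra.neg_mem _ (Subalgebra.mul_mem _ hp'v hgu)
      · exact neg_mem (Ideal.mul_mem_right _ _ hp'2)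
    have hBD' : (⟨vf (-(p' * (g * u))) j', hGB⟩ : G0 n hn) ∈
        LieAlgebra.derivedSeries ℂ (G0 n hn) (2 * r + 1 + 1 + 1) :=
      brack_mem hn hGB hAD' hRD' hbrB
    refine ⟨j', g * u, -(p' * (g * u)), by omega, hgm.mul hum,
      (hp'm.mul (hgm.mul hum)).neg, ?_, ?_, ?_, hGA, hGB, ?_, ?_⟩
    · rw [hjn1]
      exact hgu
    · exact varsGE_mono (by omega) (Subalgebra.neg_mem _ (Subalgebra.mul_mem _ hp'v hgu))
    · exact neg_mem (Ideal.mul_mem_right _ _ hp'2)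
    · have : 2 * (r + 1) = 2 * r + 1 + 1 := by ring
      rw [this]
      exact hAD'
    · have : 2 * (r + 1) + 1 = 2 * r + 1 + 1 + 1 := by ring
      rw [this]
      exact hBD'

lemma lower_bound (hn : 1 ≤ n) :
    LieAlgebra.derivedSeries ℂ (G0 n hn) (2 * n - 1) ≠ ⊥ := by
  obtain ⟨j, f, g, hjval, hfm, hgm, hf, hg, hg2, hA, hB, hAD, hBD⟩ :=
    lower_master hn (n - 1) le_rfl
  have harith : 2 * (n - 1) + 1 = 2 * n - 1 := by omega
  rw [harith] at hBD
  intro hbot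
  rw [hbot, LieSubmodule.mem_bot] at hBD
  have hzero : vf g j = 0 := congrArg Subtype.val hBD
  have := congrArg (fun D : Derivation ℂ (Rn n) (Rn n) => D (MvPowerSeries.X j)) hzero
  simp only [vf_X, if_pos rfl] at this
  exact hgm.ne_zero (by simpa using this)

end Chain

end S11

/-- the set `G₀ = U₁ ⊕ V₁ ⊕ … ⊕ Uₙ ⊕ Vₙ` of formal vector fields `X`
with `X(xⱼ) = aⱼ + xⱼ·bⱼ` (`aⱼ ∈ m² ∩ ℂ[[x_{j+1},…,xₙ]]`, `bⱼ ∈ m ∩ ℂ[[x_{j+1},…,xₙ]]`)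
for `j < n` and `X(xₙ) = t·xₙ² + s·xₙ` is a Lie subalgebra of the formal vector fields
singular at `0`, whose `2n`-th derived algebra is zero while its `(2n-1)`-st derived
algebra is nonzero; in particular it has derived length exactly `2n`. -/
theorem exists_lieSubalgebra_derived_length_two_mul (n : ℕ) (hn : 1 ≤ n) :
    ∃ G₀ : LieSubalgebra ℂ
      (Derivation ℂ (MvPowerSeries (Fin n) ℂ) (MvPowerSeries (Fin n) ℂ)),
      (∀ X, X ∈ G₀ ↔
        ((∀ j : Fin n, (j : ℕ) < n - 1 →
          ∃ a b : MvPowerSeries (Fin n) ℂ,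
            OnlyVarsAfter n j a ∧ OnlyVarsAfter n j b ∧
            a ∈ (mIdeal n) ^ 2 ∧ b ∈ mIdeal n ∧
            X (MvPowerSeries.X j) = a + MvPowerSeries.X j * b) ∧
        (∀ j : Fin n, (j : ℕ) = n - 1 →
          ∃ t s : ℂ,
            X (MvPowerSeries.X j) = t • (MvPowerSeries.X j) ^ 2 +
              s • MvPowerSeries.X j))) ∧
      (∀ X ∈ G₀, ∀ f ∈ mIdeal n, X f ∈ mIdeal n) ∧
      LieAlgebra.derivedSeries ℂ G₀ (2 * n) = ⊥ ∧
      LieAlgebra.derivedSeries ℂ G₀ (2 * n - 1) ≠ ⊥ := by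
  refine ⟨S11.G0 n hn, fun X => Iff.rfl, ?_, S11.upper_bound hn, S11.lower_bound hn⟩
  intro X hX f _
  exact S11.Gcond_mem_m hn hX f
end

section
/- Fix n ≥ 4. Define monomials w₁,…,w_{n−1} in ℂ[x₁,…,xₙ] by w_{n−1} = xₙ and wⱼ = x_{j+1}²·w_{j+1}² for 1 ≤ j ≤ n−2. Define derivations of ℂ[[x₁,…,xₙ]] by X₁ = w₁·x₂²·∂/∂x₁, X₂ = w₂·(4x₁x₂·∂/∂x₁ + x₂²·∂/∂x₂), X₃ = w₃·(−4x₁x₃·∂/∂x₁ − 2x₂x₃·∂/∂x₂ + x₃²·∂/∂x₃), X_k = w_k·(−2x_{k−1}x_k·∂/∂x_{k−1} + x_k²·∂/∂x_k) for 4 ≤ k ≤ n−1, and Xₙ = −x_{n−1}xₙ·∂/∂x_{n−1} + xₙ²·∂/∂xₙ. Then the derivations X₁,…,Xₙ pairwise commute: [X_k, X_j] = 0 for all 1 ≤ j, k ≤ n. -/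
open MvPowerSeries Finsupp

variable {n : ℕ}

private abbrev R' (n : ℕ) := MvPowerSeries (Fin n) ℂ

private lemma deriv_poly (D : Derivation ℂ (R' n) (R' n))
    (hD : ∀ s : Fin n, D (MvPowerSeries.X s) = 0) (p : MvPolynomial (Fin n) ℂ) :
    D (↑p : R' n) = 0 := by
  induction p using MvPolynomial.induction_on with
  | C a =>
      rw [MvPolynomial.coe_C, c_eq_algebraMap]
      exact D.map_algebraMap a
  | add p q hp hq => rw [MvPolynomial.coe_add, map_add, hp, hq, add_zero]
  | mul_X p s hp =>
      rw [MvPolynomial.coe_mul, MvPolynomial.coe_X, Derivation.leibniz, hD s, hp]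
      simp

private lemma decomp (g : R' n) (h0 : MvPowerSeries.coeff (R := ℂ) 0 g = 0) :
    ∃ gi : Fin n → R' n,
      (g = ∑ i : Fin n, MvPowerSeries.X i * gi i) ∧
      ∀ i d, MvPowerSeries.coeff (R := ℂ) d (gi i) = 0 ∨
        MvPowerSeries.coeff (R := ℂ) d (gi i)
          = MvPowerSeries.coeff (R := ℂ) (d + Finsupp.single i 1) g := by
  classical
  set gi : Fin n → R' n := fun i => fun d => if (∀ j, j < i → d j = 0)
      then MvPowerSeries.coeff (R := ℂ) (d + Finsupp.single i 1) g else 0 with hgi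
  have hcoeff : ∀ i d, MvPowerSeries.coeff (R := ℂ) d (gi i)
      = if (∀ j, j < i → d j = 0)
        then MvPowerSeries.coeff (R := ℂ) (d + Finsupp.single i 1) g else 0 := fun i d => rfl
  refine ⟨gi, ?_, ?_⟩
  · ext e
    rw [map_sum]
    by_cases he : e = 0
    · subst he
      rw [h0]
      refine (Finset.sum_eq_zero ?_).symm
      intro i _
      rw [X_def, coeff_monomial_mul, if_neg]
      simp [Finsupp.single_le_iff]
    · have hsupp : e.support.Nonempty := Finsupp.support_nonempty_iff.mpr he
      set i0 := e.support.min' hsupp with hi0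
      have hi0mem : i0 ∈ e.support := e.support.min'_mem hsupp
      have hi0ne : e i0 ≠ 0 := Finsupp.mem_support_iff.mp hi0mem
      have hle : Finsupp.single i0 1 ≤ e :=
        Finsupp.single_le_iff.mpr (Nat.one_le_iff_ne_zero.mpr hi0ne)
      have hkey : ∀ i : Fin n,
          MvPowerSeries.coeff (R := ℂ) e (MvPowerSeries.X i * gi i)
          = if i = i0 then MvPowerSeries.coeff (R := ℂ) e g else 0 := by
        intro i
        rw [X_def, coeff_monomial_mul]
        by_cases hi : Finsupp.single i 1 ≤ e
        · rw [if_pos hi, one_mul, hcoeff]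
          have hei : e i ≠ 0 := by
            have := Finsupp.single_le_iff.mp hi; omega
          have himem : i ∈ e.support := Finsupp.mem_support_iff.mpr hei
          by_cases hii : i = i0
          · subst hii
            rw [if_pos, if_pos rfl, tsub_add_cancel_of_le hi]
            intro j hj
            have hjn : j ∉ e.support := fun hmem => absurd (e.support.min'_le j hmem) (not_le.mpr hj)
            have hje : e j = 0 := Finsupp.notMem_support_iff.mp hjn
            rw [Finsupp.tsub_apply, hje]; simp
          · rw [if_neg, if_neg hii]
            intro hall
            have hlt : i0 < i := lt_of_le_of_ne (e.support.min'_le i himem) (fun h => hii h.symm)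
            have := hall i0 hlt
            rw [Finsupp.tsub_apply, Finsupp.single_apply, if_neg hii] at this
            omega
        · rw [if_neg hi, if_neg]
          intro hii; subst hii; exact hi hle
      rw [Finset.sum_congr rfl (fun i _ => hkey i)]
      simp
  · intro i d
    rw [hcoeff]
    split
    · right; rfl
    · left; rfl

private lemma key (D : Derivation ℂ (R' n) (R' n))
    (hD : ∀ s : Fin n, D (MvPowerSeries.X s) = 0) :
    ∀ N : ℕ, ∀ g : R' n,
      (∀ d : Fin n →₀ ℕ, (d.sum fun _ e => e) < N → MvPowerSeries.coeff (R := ℂ) d g = 0) →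
      ∀ d : Fin n →₀ ℕ, (d.sum fun _ e => e) + 1 < N → MvPowerSeries.coeff (R := ℂ) d (D g) = 0 := by
  intro N
  induction N with
  | zero => intro g hg d hd; omega
  | succ N ih =>
    intro g hg d hd
    have h0 : MvPowerSeries.coeff (R := ℂ) 0 g = 0 := by
      refine hg 0 ?_
      rw [Finsupp.sum_zero_index]; omega
    obtain ⟨gi, hg1, hg2⟩ := decomp g h0
    have hsum1 : ∀ (i : Fin n) (e : Fin n →₀ ℕ),
        ((e + Finsupp.single i 1).sum fun _ x => x) = (e.sum fun _ x => x) + 1 := by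
      intro i e
      rw [Finsupp.sum_add_index' (fun _ => rfl) (fun _ _ _ => rfl),
        Finsupp.sum_single_index rfl]
    have hgi : ∀ (i : Fin n) (e : Fin n →₀ ℕ), (e.sum fun _ x => x) < N →
        MvPowerSeries.coeff (R := ℂ) e (gi i) = 0 := by
      intro i e he
      rcases hg2 i e with h | h
      · exact h
      · rw [h]
        exact hg _ (by rw [hsum1]; omega)
    have hDg : D g = ∑ i : Fin n, MvPowerSeries.X i * D (gi i) := by
      rw [hg1, map_sum]
      refine Finset.sum_congr rfl fun i _ => ?_
      rw [Derivation.leibniz, hD i, smul_eq_mul, smul_eq_mul, mul_zero, add_zero]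
    rw [hDg, map_sum]
    refine Finset.sum_eq_zero fun i _ => ?_
    rw [X_def, coeff_monomial_mul]
    by_cases hi : Finsupp.single i 1 ≤ d
    · rw [if_pos hi, one_mul]
      have hd' : ((d - Finsupp.single i 1).sum fun _ x => x) + 1 = d.sum fun _ x => x := by
        conv_rhs => rw [← tsub_add_cancel_of_le hi]
        rw [hsum1]
      refine ih (gi i) (hgi i) _ ?_
      omega
    · rw [if_neg hi]

private lemma deriv_ext (hn : 0 < n) (D : Derivation ℂ (R' n) (R' n))
    (hD : ∀ s : Fin n, D (MvPowerSeries.X s) = 0) : D = 0 := by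
  apply Derivation.ext
  intro f
  rw [Derivation.zero_apply]
  apply MvPowerSeries.ext; intro d
  rw [MvPowerSeries.coeff_zero]
  set N := (d.sum fun _ e => e) + 2 with hN
  set c : Fin n →₀ ℕ := Finsupp.equivFunOnFinite.symm (fun _ => N) with hc
  have hcj : ∀ j, c j = N := fun j => rfl
  set p := MvPowerSeries.trunc ℂ c f with hp
  have hres : ∀ e : Fin n →₀ ℕ, (e.sum fun _ x => x) < N →
      MvPowerSeries.coeff (R := ℂ) e (f - ↑p) = 0 := by
    intro e he
    have hj : ∀ j, e j ≤ e.sum fun _ x => x := by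
      intro j
      by_cases h : j ∈ e.support
      · rw [Finsupp.sum]
        exact Finset.single_le_sum (f := fun a => e a) (fun _ _ => Nat.zero_le _) h
      · rw [Finsupp.notMem_support_iff.mp h]; exact Nat.zero_le _
    have hlt : e < c := by
      constructor
      · intro j; rw [hcj]; exact le_trans (hj j) (le_of_lt he)
      · intro hle
        have := hle ⟨0, hn⟩
        rw [hcj] at this
        have := hj ⟨0, hn⟩
        omega
    rw [map_sub, MvPolynomial.coeff_coe, MvPowerSeries.coeff_trunc, if_pos hlt, sub_self]
  have hDf : D f = D (f - ↑p) := by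
    conv_lhs => rw [show f = ↑p + (f - ↑p) by ring]
    rw [map_add, deriv_poly D hD p, zero_add]
  rw [hDf]
  exact key D hD N _ hres d (by omega)


private lemma wzero {n : ℕ} (hn : 2 ≤ n) (x w : ℕ → R' n)
    (hwlast : w (n-1) = x n)
    (hwrec : ∀ j, 1 ≤ j → j ≤ n - 2 → w j = x (j+1) ^ 2 * w (j+1) ^ 2)
    (D : Derivation ℂ (R' n) (R' n))
    (hz : ∀ i, 2 ≤ i → i ≤ n → D (x i) = 0) :
    ∀ m, 1 ≤ m → m ≤ n - 1 → D (w m) = 0 := by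
  have claim : ∀ d m, 1 ≤ m → m + d = n - 1 → D (w m) = 0 := by
    intro d
    induction d with
    | zero =>
        intro m hm1 hm2
        have hm : m = n - 1 := by omega
        subst hm
        rw [hwlast]; exact hz n (by omega) le_rfl
    | succ d ih =>
        intro m hm1 hm2
        rw [hwrec m hm1 (by omega)]
        simp only [pow_two, Derivation.leibniz, smul_eq_mul]
        rw [hz (m+1) (by omega) (by omega), ih (m+1) (by omega) (by omega)]
        ring
  exact fun m hm1 hm2 => claim (n - 1 - m) m hm1 (by omega)

private lemma wmaster {n : ℕ} (hn : 4 ≤ n) (x w : ℕ → R' n)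
    (hwlast : w (n-1) = x n)
    (hwrec : ∀ j, 1 ≤ j → j ≤ n - 2 → w j = x (j+1) ^ 2 * w (j+1) ^ 2)
    (D : Derivation ℂ (R' n) (R' n)) (u : ℕ) (hu1 : 1 ≤ u) (hu2 : u ≤ n - 2)
    (a : R' n)
    (hz : ∀ i, 2 ≤ i → i ≤ n → i ≠ u → i ≠ u + 1 → D (x i) = 0)
    (hdt : D (x (u+1)) = a * x (u+1) ^ 2)
    (hdu : 2 ≤ u → D (x u) = a * (-(2 * x u * x (u+1)))) :
    (∀ m, 1 ≤ m → m ≤ n - 1 → m ≠ u → D (w m) = 0) ∧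
      D (w u) = 2 * a * x (u+1) * w u := by
  have claim : ∀ d m, 1 ≤ m → m + d = n - 1 →
      D (w m) = if m = u then 2 * a * x (u+1) * w u else 0 := by
    intro d
    induction d with
    | zero =>
        intro m hm1 hm2
        have hm : m = n - 1 := by omega
        subst hm
        rw [if_neg (by omega), hwlast]
        exact hz n (by omega) le_rfl (by omega) (by omega)
    | succ d ih =>
        intro m hm1 hm2
        have hrec := hwrec m hm1 (by omega)
        have ihm := ih (m+1) (by omega) (by omega)
        by_cases hmu : m = u
        · subst hmu
          rw [if_neg (by omega)] at ihm
          rw [if_pos rfl]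
          conv_rhs => rw [hrec]
          conv_lhs => rw [hrec]
          simp only [pow_two, Derivation.leibniz, smul_eq_mul]
          rw [hdt, ihm]
          ring
        · by_cases hmu1 : m + 1 = u
          · subst hmu1
            rw [if_pos rfl] at ihm
            rw [if_neg hmu]
            conv_lhs => rw [hrec]
            simp only [pow_two, Derivation.leibniz, smul_eq_mul]
            rw [hdu (by omega), ihm]
            ring
          · rw [if_neg hmu1] at ihm
            rw [if_neg hmu]
            conv_lhs => rw [hrec]
            simp only [pow_two, Derivation.leibniz, smul_eq_mul]
            rw [hz (m+1) (by omega) (by omega) hmu1 (by omega), ihm]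
            ring
  constructor
  · intro m hm1 hm2 hmu
    have := claim (n - 1 - m) m hm1 (by omega)
    rwa [if_neg hmu] at this
  · have := claim (n - 1 - u) u hu1 (by omega)
    rwa [if_pos rfl] at this

private lemma wlastval {n : ℕ} (hn : 4 ≤ n) (x w : ℕ → R' n)
    (hwlast : w (n-1) = x n)
    (hwrec : ∀ j, 1 ≤ j → j ≤ n - 2 → w j = x (j+1) ^ 2 * w (j+1) ^ 2)
    (D : Derivation ℂ (R' n) (R' n))
    (hz : ∀ i, 1 ≤ i → i ≤ n - 2 → D (x i) = 0)
    (hd1 : D (x (n-1)) = -(x (n-1) * x n))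
    (hd2 : D (x n) = x n ^ 2) :
    (∀ m, 1 ≤ m → m ≤ n - 2 → D (w m) = 0) ∧ D (w (n-1)) = x n * w (n-1) := by
  have hv : D (w (n-1)) = x n * w (n-1) := by
    rw [hwlast, hd2]; ring
  have hbase : D (w (n-2)) = 0 := by
    have hrec := hwrec (n-2) (by omega) (by omega)
    rw [show n - 2 + 1 = n - 1 from by omega] at hrec
    rw [hrec]
    simp only [pow_two, Derivation.leibniz, smul_eq_mul]
    rw [hd1, hv]
    ring
  have claim : ∀ d m, 1 ≤ m → m + d = n - 2 → D (w m) = 0 := by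
    intro d
    induction d with
    | zero =>
        intro m hm1 hm2
        have hm : m = n - 2 := by omega
        subst hm; exact hbase
    | succ d ih =>
        intro m hm1 hm2
        rw [hwrec m hm1 (by omega)]
        simp only [pow_two, Derivation.leibniz, smul_eq_mul]
        rw [hz (m+1) (by omega) (by omega), ih (m+1) (by omega) (by omega)]
        ring
  exact ⟨fun m hm1 hm2 => claim (n - 2 - m) m hm1 (by omega), hv⟩

/-- with `wⱼ` the monomials `w_{n-1} = xₙ`, `wⱼ = x_{j+1}²·w_{j+1}²`, the
derivations `X₁ = w₁x₂²∂/∂x₁`, `X₂ = w₂(4x₁x₂∂/∂x₁ + x₂²∂/∂x₂)`,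
`X₃ = w₃(−4x₁x₃∂/∂x₁ − 2x₂x₃∂/∂x₂ + x₃²∂/∂x₃)`,
`X_k = w_k(−2x_{k−1}x_k∂/∂x_{k−1} + x_k²∂/∂x_k)` for `4 ≤ k ≤ n−1` and
`Xₙ = −x_{n−1}xₙ∂/∂x_{n−1} + xₙ²∂/∂xₙ` of `ℂ[[x₁,…,xₙ]]` pairwise commute.
(A derivation is specified by its values on the variables; we use 1-based indexing,
`x j = MvPowerSeries.X ⟨j-1⟩`.) -/
theorem derivations_pairwise_commute (n : ℕ) (hn : 4 ≤ n)
    (x : ℕ → MvPowerSeries (Fin n) ℂ)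
    (hx : ∀ j : ℕ, ∀ _ : 1 ≤ j, ∀ _ : j ≤ n,
      x j = MvPowerSeries.X (⟨j - 1, by omega⟩ : Fin n))
    (w : ℕ → MvPowerSeries (Fin n) ℂ)
    (hwlast : w (n - 1) = x n)
    (hwrec : ∀ j : ℕ, 1 ≤ j → j ≤ n - 2 → w j = x (j + 1) ^ 2 * w (j + 1) ^ 2)
    (XX : ℕ → Derivation ℂ (MvPowerSeries (Fin n) ℂ) (MvPowerSeries (Fin n) ℂ))
    (hX1a : XX 1 (x 1) = w 1 * x 2 ^ 2)
    (hX1b : ∀ i : ℕ, 2 ≤ i → i ≤ n → XX 1 (x i) = 0)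
    (hX2a : XX 2 (x 1) = w 2 * (4 * x 1 * x 2))
    (hX2b : XX 2 (x 2) = w 2 * x 2 ^ 2)
    (hX2c : ∀ i : ℕ, 3 ≤ i → i ≤ n → XX 2 (x i) = 0)
    (hX3a : XX 3 (x 1) = w 3 * (-(4 * x 1 * x 3)))
    (hX3b : XX 3 (x 2) = w 3 * (-(2 * x 2 * x 3)))
    (hX3c : XX 3 (x 3) = w 3 * x 3 ^ 2)
    (hX3d : ∀ i : ℕ, 4 ≤ i → i ≤ n → XX 3 (x i) = 0)
    (hXka : ∀ k : ℕ, 4 ≤ k → k ≤ n - 1 →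
      XX k (x (k - 1)) = w k * (-(2 * x (k - 1) * x k)))
    (hXkb : ∀ k : ℕ, 4 ≤ k → k ≤ n - 1 → XX k (x k) = w k * x k ^ 2)
    (hXkc : ∀ k : ℕ, 4 ≤ k → k ≤ n - 1 → ∀ i : ℕ, 1 ≤ i → i ≤ n →
      i ≠ k - 1 → i ≠ k → XX k (x i) = 0)
    (hXna : XX n (x (n - 1)) = -(x (n - 1) * x n))
    (hXnb : XX n (x n) = x n ^ 2)
    (hXnc : ∀ i : ℕ, 1 ≤ i → i ≤ n - 2 → XX n (x i) = 0) :
    ∀ j k : ℕ, 1 ≤ j → j ≤ n → 1 ≤ k → k ≤ n → ⁅XX k, XX j⁆ = 0 := by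
  have h2R : ∀ m : ℕ, XX m (2 : MvPowerSeries (Fin n) ℂ) = 0 := fun m => by
    rw [show (2 : MvPowerSeries (Fin n) ℂ) = ((2 : ℕ) : MvPowerSeries (Fin n) ℂ) by norm_cast]
    exact Derivation.map_natCast _ 2
  have h4R : ∀ m : ℕ, XX m (4 : MvPowerSeries (Fin n) ℂ) = 0 := fun m => by
    rw [show (4 : MvPowerSeries (Fin n) ℂ) = ((4 : ℕ) : MvPowerSeries (Fin n) ℂ) by norm_cast]
    exact Derivation.map_natCast _ 4
  have hw1z : ∀ m, 1 ≤ m → m ≤ n - 1 → XX 1 (w m) = 0 :=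
    wzero (by omega) x w hwlast hwrec (XX 1) (fun i h2 hn' => hX1b i h2 hn')
  have hw2 := wmaster hn x w hwlast hwrec (XX 2) 1 le_rfl (by omega) (w 2)
      (fun i hi2 hin h1 h2' => hX2c i (by omega) hin) hX2b (fun h => absurd h (by omega))
  have hw2z : ∀ m, 1 ≤ m → m ≤ n - 1 → m ≠ 1 → XX 2 (w m) = 0 := hw2.1
  have hw2v : XX 2 (w 1) = 2 * w 2 * x 2 * w 1 := hw2.2
  have hw3 := wmaster hn x w hwlast hwrec (XX 3) 2 (by omega) (by omega) (w 3)
      (fun i hi2 hin hne2 hne3 => hX3d i (by omega) hin) hX3c (fun _ => hX3b)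
  have hw3z : ∀ m, 1 ≤ m → m ≤ n - 1 → m ≠ 2 → XX 3 (w m) = 0 := hw3.1
  have hw3v : XX 3 (w 2) = 2 * w 3 * x 3 * w 2 := hw3.2
  have hwg : ∀ k, 4 ≤ k → k ≤ n - 1 →
      (∀ m', 1 ≤ m' → m' ≤ n - 1 → m' ≠ k - 1 → XX k (w m') = 0) ∧
        XX k (w (k - 1)) = 2 * w k * x k * w (k - 1) := by
    intro k hk4 hkn1
    obtain ⟨m, rfl⟩ : ∃ m, k = m + 1 := ⟨k - 1, by omega⟩
    rw [Nat.add_sub_cancel]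
    have h := wmaster hn x w hwlast hwrec (XX (m+1)) m (by omega) (by omega) (w (m+1))
      (fun i hi2 hin hnem hnem1 => hXkc (m+1) hk4 hkn1 i (by omega) hin (by omega) hnem1)
      (hXkb (m+1) hk4 hkn1)
      (fun _ => by have h := hXka (m+1) hk4 hkn1; rwa [Nat.add_sub_cancel] at h)
    exact ⟨fun m' h1 h2' hne => h.1 m' h1 h2' hne, h.2⟩
  have hwn := wlastval hn x w hwlast hwrec (XX n) hXnc hXna hXnb
  have hwnz : ∀ m, 1 ≤ m → m ≤ n - 2 → XX n (w m) = 0 := hwn.1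
  have hwnv : XX n (w (n - 1)) = x n * w (n - 1) := hwn.2
  have main : ∀ j k, 1 ≤ j → j < k → k ≤ n → ∀ i, 1 ≤ i → i ≤ n →
      XX k (XX j (x i)) = XX j (XX k (x i)) := by
    intro j k hj1 hjk hkn i hi1 hin
    have hcj : j = 1 ∨ j = 2 ∨ j = 3 ∨ (4 ≤ j ∧ j ≤ n - 1) ∨ n = j := by omega
    have hck : k = 1 ∨ k = 2 ∨ k = 3 ∨ (4 ≤ k ∧ k ≤ n - 1) ∨ n = k := by omega
    rcases hcj with rfl | rfl | rfl | ⟨hj4, hjn1⟩ | rfl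
    · -- j = 1
      rcases hck with rfl | rfl | rfl | ⟨hk4, hkn1⟩ | rfl
      · omega
      · -- k = 2
        rcases show i = 1 ∨ i = 2 ∨ 3 ≤ i from by omega with rfl | rfl | hi3
        · simp only [hX1a, hX2a, hX2b, hw2v, hw1z 1 (by omega) (by omega),
            hw1z 2 (by omega) (by omega), hX1b 2 (by omega) (by omega),
            pow_two, Derivation.leibniz, smul_eq_mul, map_zero, map_neg, h2R, h4R] <;> ring
        · simp only [hX1a, hX2b, hw2v, hw1z 2 (by omega) (by omega),
            hX1b 2 (by omega) (by omega),
            pow_two, Derivation.leibniz, smul_eq_mul, map_zero, map_neg, h2R, h4R] <;> ring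
        · simp only [hX1b i (by omega) hin, hX2c i (by omega) hin, map_zero]
      · -- k = 3
        rcases show i = 1 ∨ i = 2 ∨ i = 3 ∨ 4 ≤ i from by omega with rfl | rfl | rfl | hi4
        · simp only [hX1a, hX3a, hX3b, hX3c, hw3z 1 (by omega) (by omega) (by omega),
            hw1z 3 (by omega) (by omega), hX1b 2 (by omega) (by omega),
            hX1b 3 (by omega) (by omega),
            pow_two, Derivation.leibniz, smul_eq_mul, map_zero, map_neg, h2R, h4R] <;> ring
        · simp only [hX3b, hw1z 3 (by omega) (by omega), hX1b 2 (by omega) (by omega),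
            hX1b 3 (by omega) (by omega),
            pow_two, Derivation.leibniz, smul_eq_mul, map_zero, map_neg, h2R, h4R] <;> ring
        · simp only [hX3c, hw1z 3 (by omega) (by omega), hX1b 3 (by omega) (by omega),
            pow_two, Derivation.leibniz, smul_eq_mul, map_zero, map_neg, h2R, h4R] <;> ring
        · simp only [hX1b i (by omega) hin, hX3d i (by omega) hin, map_zero]
      · -- k generic
        have ka := hXka k hk4 hkn1
        have kb := hXkb k hk4 hkn1
        have kz := hXkc k hk4 hkn1
        have kwz := (hwg k hk4 hkn1).1
        rcases show i = 1 ∨ i = k - 1 ∨ k = i ∨ (2 ≤ i ∧ i ≠ k - 1 ∧ i ≠ k)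
            from by omega with rfl | hi | rfl | ⟨h2i, hne1, hne2⟩
        · simp only [hX1a, kz 1 (by omega) (by omega) (by omega) (by omega),
            kz 2 (by omega) (by omega) (by omega) (by omega),
            kwz 1 (by omega) (by omega) (by omega), hX1b 2 (by omega) (by omega),
            pow_two, Derivation.leibniz, smul_eq_mul, map_zero, map_neg, h2R, h4R] <;> ring
        · subst hi
          simp only [ka, hX1b (k-1) (by omega) (by omega), hX1b k (by omega) (by omega),
            hw1z k (by omega) (by omega),
            pow_two, Derivation.leibniz, smul_eq_mul, map_zero, map_neg, h2R, h4R] <;> ring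
        · simp only [kb, hX1b k (by omega) (by omega), hw1z k (by omega) (by omega),
            pow_two, Derivation.leibniz, smul_eq_mul, map_zero, map_neg, h2R, h4R] <;> ring
        · simp only [hX1b i (by omega) hin,
            kz i (by omega) hin hne1 hne2, map_zero]
      · -- k = n
        rcases show i = 1 ∨ i = n - 1 ∨ n = i ∨ (2 ≤ i ∧ i ≤ n - 2)
            from by omega with rfl | hi | rfl | ⟨h2i, hin2⟩
        · simp only [hX1a, hXnc 1 (by omega) (by omega), hXnc 2 (by omega) (by omega),
            hwnz 1 (by omega) (by omega), hX1b 2 (by omega) (by omega),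
            pow_two, Derivation.leibniz, smul_eq_mul, map_zero, map_neg, h2R, h4R] <;> ring
        · subst hi
          simp only [hXna, hX1b (n-1) (by omega) (by omega), hX1b n (by omega) (by omega),
            pow_two, Derivation.leibniz, smul_eq_mul, map_zero, map_neg, h2R, h4R] <;> ring
        · simp only [hXnb, hX1b n (by omega) (by omega),
            pow_two, Derivation.leibniz, smul_eq_mul, map_zero, map_neg, h2R, h4R] <;> ring
        · simp only [hX1b i (by omega) hin, hXnc i (by omega) hin2, map_zero]
    · -- j = 2
      rcases hck with rfl | rfl | rfl | ⟨hk4, hkn1⟩ | rfl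
      · omega
      · omega
      · -- k = 3
        rcases show i = 1 ∨ i = 2 ∨ i = 3 ∨ 4 ≤ i from by omega with rfl | rfl | rfl | hi4
        · simp only [hX2a, hX2b, hX3a, hX3b, hw3v, hw2z 3 (by omega) (by omega) (by omega),
            hX2c 3 (by omega) (by omega),
            pow_two, Derivation.leibniz, smul_eq_mul, map_zero, map_neg, h2R, h4R] <;> ring
        · simp only [hX2b, hX3b, hw3v, hw2z 3 (by omega) (by omega) (by omega),
            hX2c 3 (by omega) (by omega),
            pow_two, Derivation.leibniz, smul_eq_mul, map_zero, map_neg, h2R, h4R] <;> ring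
        · simp only [hX3c, hw2z 3 (by omega) (by omega) (by omega),
            hX2c 3 (by omega) (by omega),
            pow_two, Derivation.leibniz, smul_eq_mul, map_zero, map_neg, h2R, h4R] <;> ring
        · simp only [hX2c i (by omega) hin, hX3d i (by omega) hin, map_zero]
      · -- k generic
        have ka := hXka k hk4 hkn1
        have kb := hXkb k hk4 hkn1
        have kz := hXkc k hk4 hkn1
        have kwz := (hwg k hk4 hkn1).1
        rcases show i = 1 ∨ i = 2 ∨ i = k - 1 ∨ k = i ∨ (3 ≤ i ∧ i ≠ k - 1 ∧ i ≠ k)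
            from by omega with rfl | rfl | hi | rfl | ⟨h3i, hne1, hne2⟩
        · simp only [hX2a, kz 1 (by omega) (by omega) (by omega) (by omega),
            kz 2 (by omega) (by omega) (by omega) (by omega),
            kwz 2 (by omega) (by omega) (by omega),
            pow_two, Derivation.leibniz, smul_eq_mul, map_zero, map_neg, h2R, h4R] <;> ring
        · simp only [hX2b, kz 2 (by omega) (by omega) (by omega) (by omega),
            kwz 2 (by omega) (by omega) (by omega),
            pow_two, Derivation.leibniz, smul_eq_mul, map_zero, map_neg, h2R, h4R] <;> ring
        · subst hi
          simp only [ka, hX2c (k-1) (by omega) (by omega), hX2c k (by omega) (by omega),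
            hw2z k (by omega) (by omega) (by omega),
            pow_two, Derivation.leibniz, smul_eq_mul, map_zero, map_neg, h2R, h4R] <;> ring
        · simp only [kb, hX2c k (by omega) (by omega),
            hw2z k (by omega) (by omega) (by omega),
            pow_two, Derivation.leibniz, smul_eq_mul, map_zero, map_neg, h2R, h4R] <;> ring
        · simp only [hX2c i (by omega) hin, kz i (by omega) hin hne1 hne2, map_zero]
      · -- k = n
        rcases show i = 1 ∨ i = 2 ∨ i = n - 1 ∨ n = i ∨ (3 ≤ i ∧ i ≤ n - 2)
            from by omega with rfl | rfl | hi | rfl | ⟨h3i, hin2⟩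
        · simp only [hX2a, hXnc 1 (by omega) (by omega), hXnc 2 (by omega) (by omega),
            hwnz 2 (by omega) (by omega),
            pow_two, Derivation.leibniz, smul_eq_mul, map_zero, map_neg, h2R, h4R] <;> ring
        · simp only [hX2b, hXnc 2 (by omega) (by omega), hwnz 2 (by omega) (by omega),
            pow_two, Derivation.leibniz, smul_eq_mul, map_zero, map_neg, h2R, h4R] <;> ring
        · subst hi
          simp only [hXna, hX2c (n-1) (by omega) (by omega), hX2c n (by omega) (by omega),
            pow_two, Derivation.leibniz, smul_eq_mul, map_zero, map_neg, h2R, h4R] <;> ring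
        · simp only [hXnb, hX2c n (by omega) (by omega),
            pow_two, Derivation.leibniz, smul_eq_mul, map_zero, map_neg, h2R, h4R] <;> ring
        · simp only [hX2c i (by omega) hin, hXnc i (by omega) hin2, map_zero]
    · -- j = 3
      rcases hck with rfl | rfl | rfl | ⟨hk4, hkn1⟩ | rfl
      · omega
      · omega
      · omega
      · -- k generic
        by_cases hk5 : 5 ≤ k
        · have ka := hXka k hk4 hkn1
          have kb := hXkb k hk4 hkn1
          have kz := hXkc k hk4 hkn1
          have kwz := (hwg k hk4 hkn1).1
          rcases show i = 1 ∨ i = 2 ∨ i = 3 ∨ i = k - 1 ∨ k = i ∨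
              (4 ≤ i ∧ i ≠ k - 1 ∧ i ≠ k)
              from by omega with rfl | rfl | rfl | hi | rfl | ⟨h4i, hne1, hne2⟩
          · simp only [hX3a, kz 1 (by omega) (by omega) (by omega) (by omega),
              kz 3 (by omega) (by omega) (by omega) (by omega),
              kwz 3 (by omega) (by omega) (by omega),
              pow_two, Derivation.leibniz, smul_eq_mul, map_zero, map_neg, h2R, h4R] <;> ring
          · simp only [hX3b, kz 2 (by omega) (by omega) (by omega) (by omega),
              kz 3 (by omega) (by omega) (by omega) (by omega),
              kwz 3 (by omega) (by omega) (by omega),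
              pow_two, Derivation.leibniz, smul_eq_mul, map_zero, map_neg, h2R, h4R] <;> ring
          · simp only [hX3c, kz 3 (by omega) (by omega) (by omega) (by omega),
              kwz 3 (by omega) (by omega) (by omega),
              pow_two, Derivation.leibniz, smul_eq_mul, map_zero, map_neg, h2R, h4R] <;> ring
          · subst hi
            simp only [ka, hX3d (k-1) (by omega) (by omega), hX3d k (by omega) (by omega),
              hw3z k (by omega) (by omega) (by omega),
              pow_two, Derivation.leibniz, smul_eq_mul, map_zero, map_neg, h2R, h4R] <;> ring
          · simp only [kb, hX3d k (by omega) (by omega),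
              hw3z k (by omega) (by omega) (by omega),
              pow_two, Derivation.leibniz, smul_eq_mul, map_zero, map_neg, h2R, h4R] <;> ring
          · simp only [hX3d i (by omega) hin, kz i (by omega) hin hne1 hne2, map_zero]
        · -- k = 4
          have hk : k = 4 := by omega
          subst hk
          have ka4 : XX 4 (x 3) = w 4 * (-(2 * x 3 * x 4)) := hXka 4 hk4 hkn1
          have kb4 := hXkb 4 hk4 hkn1
          have kz1 : XX 4 (x 1) = 0 := hXkc 4 hk4 hkn1 1 (by omega) (by omega) (by omega) (by omega)
          have kz2 : XX 4 (x 2) = 0 := hXkc 4 hk4 hkn1 2 (by omega) (by omega) (by omega) (by omega)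
          have kwv4 : XX 4 (w 3) = 2 * w 4 * x 4 * w 3 := (hwg 4 hk4 hkn1).2
          rcases show i = 1 ∨ i = 2 ∨ i = 3 ∨ i = 4 ∨ 5 ≤ i
              from by omega with rfl | rfl | rfl | rfl | hi5
          · simp only [hX3a, kz1, kz2, ka4, kwv4,
              pow_two, Derivation.leibniz, smul_eq_mul, map_zero, map_neg, h2R, h4R] <;> ring
          · simp only [hX3b, kz1, kz2, ka4, kwv4,
              pow_two, Derivation.leibniz, smul_eq_mul, map_zero, map_neg, h2R, h4R] <;> ring
          · simp only [hX3c, hX3d 4 (by omega) (by omega), ka4, kwv4,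
              hw3z 4 (by omega) (by omega) (by omega),
              pow_two, Derivation.leibniz, smul_eq_mul, map_zero, map_neg, h2R, h4R] <;> ring
          · simp only [hX3d 4 (by omega) (by omega), kb4,
              hw3z 4 (by omega) (by omega) (by omega),
              pow_two, Derivation.leibniz, smul_eq_mul, map_zero, map_neg, h2R, h4R] <;> ring
          · simp only [hX3d i (by omega) hin,
              hXkc 4 hk4 hkn1 i (by omega) hin (by omega) (by omega), map_zero]
      · -- k = n
        by_cases hn5 : 5 ≤ n
        · rcases show i = 1 ∨ i = 2 ∨ i = 3 ∨ i = n - 1 ∨ n = i ∨ (4 ≤ i ∧ i ≤ n - 2)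
              from by omega with rfl | rfl | rfl | hi | rfl | ⟨h4i, hin2⟩
          · simp only [hX3a, hXnc 1 (by omega) (by omega), hXnc 3 (by omega) (by omega),
              hwnz 3 (by omega) (by omega),
              pow_two, Derivation.leibniz, smul_eq_mul, map_zero, map_neg, h2R, h4R] <;> ring
          · simp only [hX3b, hXnc 2 (by omega) (by omega), hXnc 3 (by omega) (by omega),
              hwnz 3 (by omega) (by omega),
              pow_two, Derivation.leibniz, smul_eq_mul, map_zero, map_neg, h2R, h4R] <;> ring
          · simp only [hX3c, hXnc 3 (by omega) (by omega), hwnz 3 (by omega) (by omega),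
              pow_two, Derivation.leibniz, smul_eq_mul, map_zero, map_neg, h2R, h4R] <;> ring
          · subst hi
            simp only [hXna, hX3d (n-1) (by omega) (by omega), hX3d n (by omega) (by omega),
              pow_two, Derivation.leibniz, smul_eq_mul, map_zero, map_neg, h2R, h4R] <;> ring
          · simp only [hXnb, hX3d n (by omega) (by omega),
              pow_two, Derivation.leibniz, smul_eq_mul, map_zero, map_neg, h2R, h4R] <;> ring
          · simp only [hX3d i (by omega) hin, hXnc i (by omega) hin2, map_zero]
        · -- n = 4
          have hn4 : n = 4 := by omega
          subst hn4
          have hwl : w 3 = x 4 := hwlast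
          have nc1 : XX 4 (x 1) = 0 := hXnc 1 (by omega) (by omega)
          have nc2 : XX 4 (x 2) = 0 := hXnc 2 (by omega) (by omega)
          have na : XX 4 (x 3) = -(x 3 * x 4) := hXna
          rcases show i = 1 ∨ i = 2 ∨ i = 3 ∨ i = 4 from by omega with rfl | rfl | rfl | rfl <;>
            simp only [hX3a, hX3b, hX3c, hX3d 4 (by omega) (by omega), hwl, na, hXnb, nc1, nc2,
              pow_two, Derivation.leibniz, smul_eq_mul, map_zero, map_neg, h2R, h4R] <;> ring
    · -- j generic
      have ja := hXka j hj4 hjn1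
      have jb := hXkb j hj4 hjn1
      have jz := hXkc j hj4 hjn1
      have jwz := (hwg j hj4 hjn1).1
      rcases hck with rfl | rfl | rfl | ⟨hk4, hkn1⟩ | rfl
      · omega
      · omega
      · omega
      · -- k generic
        by_cases hkj : k = j + 1
        · subst hkj
          have ka' : XX (j+1) (x j) = w (j+1) * (-(2 * x j * x (j+1))) := by
            have := hXka (j+1) hk4 hkn1; rwa [Nat.add_sub_cancel] at this
          have kb' := hXkb (j+1) hk4 hkn1
          have kz' := hXkc (j+1) hk4 hkn1
          have kwv' : XX (j+1) (w j) = 2 * w (j+1) * x (j+1) * w j := by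
            have := (hwg (j+1) hk4 hkn1).2; rwa [Nat.add_sub_cancel] at this
          rcases show i = j - 1 ∨ j = i ∨ i = j + 1 ∨ (1 ≤ i ∧ i ≠ j - 1 ∧ i ≠ j ∧ i ≠ j + 1)
              from by omega with hi | rfl | hi | ⟨h1i, hne1, hne2, hne3⟩
          · subst hi
            simp only [ja, kz' (j-1) (by omega) (by omega) (by omega) (by omega), ka', kwv',
              pow_two, Derivation.leibniz, smul_eq_mul, map_zero, map_neg, h2R, h4R] <;> ring
          · simp only [jb, ka', kwv', jz (j+1) (by omega) (by omega) (by omega) (by omega),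
              jwz (j+1) (by omega) (by omega) (by omega),
              pow_two, Derivation.leibniz, smul_eq_mul, map_zero, map_neg, h2R, h4R] <;> ring
          · subst hi
            simp only [jz (j+1) (by omega) (by omega) (by omega) (by omega), kb',
              jwz (j+1) (by omega) (by omega) (by omega),
              pow_two, Derivation.leibniz, smul_eq_mul, map_zero, map_neg, h2R, h4R] <;> ring
          · simp only [jz i (by omega) hin hne1 hne2,
              kz' i (by omega) hin (by omega) hne3, map_zero]
        · -- k ≥ j + 2
          have ka := hXka k hk4 hkn1
          have kb := hXkb k hk4 hkn1
          have kz := hXkc k hk4 hkn1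
          have kwz := (hwg k hk4 hkn1).1
          rcases show i = j - 1 ∨ j = i ∨ i = k - 1 ∨ k = i ∨
              (1 ≤ i ∧ i ≠ j - 1 ∧ i ≠ j ∧ i ≠ k - 1 ∧ i ≠ k)
              from by omega with hi | rfl | hi | rfl | ⟨h1i, hne1, hne2, hne3, hne4⟩
          · subst hi
            simp only [ja, kz (j-1) (by omega) (by omega) (by omega) (by omega),
              kz j (by omega) (by omega) (by omega) (by omega),
              kwz j (by omega) (by omega) (by omega),
              pow_two, Derivation.leibniz, smul_eq_mul, map_zero, map_neg, h2R, h4R] <;> ring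
          · simp only [jb, kz j (by omega) (by omega) (by omega) (by omega),
              kwz j (by omega) (by omega) (by omega),
              pow_two, Derivation.leibniz, smul_eq_mul, map_zero, map_neg, h2R, h4R] <;> ring
          · subst hi
            simp only [ka, jz (k-1) (by omega) (by omega) (by omega) (by omega),
              jz k (by omega) (by omega) (by omega) (by omega),
              jwz k (by omega) (by omega) (by omega),
              pow_two, Derivation.leibniz, smul_eq_mul, map_zero, map_neg, h2R, h4R] <;> ring
          · simp only [kb, jz k (by omega) (by omega) (by omega) (by omega),
              jwz k (by omega) (by omega) (by omega),
              pow_two, Derivation.leibniz, smul_eq_mul, map_zero, map_neg, h2R, h4R] <;> ring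
          · simp only [jz i (by omega) hin hne1 hne2, kz i (by omega) hin hne3 hne4, map_zero]
      · -- k = n
        by_cases hj2 : j ≤ n - 2
        · rcases show i = j - 1 ∨ j = i ∨ i = n - 1 ∨ n = i ∨
              (1 ≤ i ∧ i ≠ j - 1 ∧ i ≠ j ∧ i ≤ n - 2)
              from by omega with hi | rfl | hi | rfl | ⟨h1i, hne1, hne2, hin2⟩
          · subst hi
            simp only [ja, hXnc (j-1) (by omega) (by omega), hXnc j (by omega) (by omega),
              hwnz j (by omega) (by omega),
              pow_two, Derivation.leibniz, smul_eq_mul, map_zero, map_neg, h2R, h4R] <;> ring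
          · simp only [jb, hXnc j (by omega) (by omega), hwnz j (by omega) (by omega),
              pow_two, Derivation.leibniz, smul_eq_mul, map_zero, map_neg, h2R, h4R] <;> ring
          · subst hi
            simp only [hXna, jz (n-1) (by omega) (by omega) (by omega) (by omega),
              jz n (by omega) (by omega) (by omega) (by omega),
              pow_two, Derivation.leibniz, smul_eq_mul, map_zero, map_neg, h2R, h4R] <;> ring
          · simp only [hXnb, jz n (by omega) (by omega) (by omega) (by omega),
              pow_two, Derivation.leibniz, smul_eq_mul, map_zero, map_neg, h2R, h4R] <;> ring
          · simp only [jz i (by omega) hin hne1 hne2, hXnc i (by omega) hin2, map_zero]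
        · -- j = n - 1
          have hjeq : j = n - 1 := by omega
          subst hjeq
          have ja' : XX (n-1) (x (n-2)) = w (n-1) * (-(2 * x (n-2) * x (n-1))) := by
            have := hXka (n-1) hj4 hjn1
            rwa [show n - 1 - 1 = n - 2 from by omega] at this
          have jzn : XX (n-1) (x n) = 0 :=
            hXkc (n-1) hj4 hjn1 n (by omega) (by omega) (by omega) (by omega)
          rcases show i = n - 2 ∨ i = n - 1 ∨ n = i ∨ (1 ≤ i ∧ i ≤ n - 3)
              from by omega with hi | hi | rfl | ⟨h1i, hin3⟩
          · subst hi
            simp only [ja', hXnc (n-2) (by omega) (by omega), hXna, hwnv,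
              pow_two, Derivation.leibniz, smul_eq_mul, map_zero, map_neg, h2R, h4R] <;> ring
          · subst hi
            simp only [jb, hXna, hwnv, jzn,
              pow_two, Derivation.leibniz, smul_eq_mul, map_zero, map_neg, h2R, h4R] <;> ring
          · simp only [jzn, hXnb,
              pow_two, Derivation.leibniz, smul_eq_mul, map_zero, map_neg, h2R, h4R] <;> ring
          · simp only [jz i (by omega) hin (by omega) (by omega),
              hXnc i (by omega) (by omega), map_zero]
    · -- j = n
      omega
  intro j k hj1 hjn hk1 hkn
  rcases lt_trichotomy j k with h | rfl | h
  · apply deriv_ext (show 0 < n from by omega)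
    intro s
    have hxi : MvPowerSeries.X s = x (s.1 + 1) := by
      rw [hx (s.1 + 1) (by omega) (by omega)]
      congr 1
    rw [Derivation.commutator_apply, hxi,
      main j k hj1 h hkn (s.1 + 1) (by omega) (by omega), sub_self]
  · exact lie_self _
  · apply deriv_ext (show 0 < n from by omega)
    intro s
    have hxi : MvPowerSeries.X s = x (s.1 + 1) := by
      rw [hx (s.1 + 1) (by omega) (by omega)]
      congr 1
    rw [Derivation.commutator_apply, hxi,
      main k j hk1 h hjn (s.1 + 1) (by omega) (by omega), sub_self]
end
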